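/- arXiv:math/0305336 — 6 statements merged into one kernel-verified Lean document; each statement's English description precedes it below -/
import Mathlib

section
/- Let 𝒜 be a central hyperplane arrangement in ℝⁿ with base region B. If the digraph 𝒬(𝒜,B) is acyclic, then the order dimension of 𝒫(𝒜,B) is at most the chromatic number of the basic graph G(𝒜,B). -/
open scoped RealInnerProductSpace

noncomputable section

variable {n : ℕ}

/-- A (linear) hyperplane in ℝⁿ: the zero set of a nonzero linear functional,
expressed via the inner product with a nonzero normal vector. -/
def IsHyperplane (H : Set (EuclideanSpace ℝ (Fin n))) : Prop :=
  ∃ v : EuclideanSpace ℝ (Fin n), v ≠ 0 ∧ H = {x | ⟪v, x⟫ = 0}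

/-- A central hyperplane arrangement: a finite nonempty collection of linear hyperplanes. -/
def IsCentralArrangement (A : Set (Set (EuclideanSpace ℝ (Fin n)))) : Prop :=
  A.Finite ∧ A.Nonempty ∧ ∀ H ∈ A, IsHyperplane H

/-- The complement of the union of the hyperplanes of the arrangement. -/
def arrComplement (A : Set (Set (EuclideanSpace ℝ (Fin n)))) : Set (EuclideanSpace ℝ (Fin n)) :=
  (⋃ H ∈ A, H)ᶜ

/-- A region of the arrangement: the closure of a connected component of the complement
of the union of the hyperplanes. -/
def IsRegion (A : Set (Set (EuclideanSpace ℝ (Fin n)))) (R : Set (EuclideanSpace ℝ (Fin n))) :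
    Prop :=
  ∃ x ∈ arrComplement A, R = closure (connectedComponentIn (arrComplement A) x)

/-- The hyperplane `H` separates the region `R` from the region `B`: their interiors lie on
strictly opposite sides of `H`. -/
def Separates (H R B : Set (EuclideanSpace ℝ (Fin n))) : Prop :=
  ∃ v : EuclideanSpace ℝ (Fin n), v ≠ 0 ∧ H = {x | ⟪v, x⟫ = 0} ∧
    (∀ x ∈ interior R, 0 < ⟪v, x⟫) ∧ (∀ x ∈ interior B, ⟪v, x⟫ < 0)

/-- S(R): the set of hyperplanes of `A` separating `R` from the base region `B`. -/
def sepSet (A : Set (Set (EuclideanSpace ℝ (Fin n)))) (B R : Set (EuclideanSpace ℝ (Fin n))) :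
    Set (Set (EuclideanSpace ℝ (Fin n))) :=
  {H | H ∈ A ∧ Separates H R B}

/-- The order of the poset of regions 𝒫(𝒜,B): containment of separating sets. -/
def regLE (A : Set (Set (EuclideanSpace ℝ (Fin n)))) (B R₁ R₂ : Set (EuclideanSpace ℝ (Fin n))) :
    Prop :=
  sepSet A B R₁ ⊆ sepSet A B R₂

/-- Strict order on regions. -/
def regLT (A : Set (Set (EuclideanSpace ℝ (Fin n)))) (B R₁ R₂ : Set (EuclideanSpace ℝ (Fin n))) :
    Prop :=
  regLE A B R₁ R₂ ∧ ¬ regLE A B R₂ R₁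

/-- The order dimension of the poset of regions 𝒫(𝒜,B): the smallest `d` such that it embeds
as an induced subposet of ℝᵈ with the componentwise order. -/
def regionOrderDim (A : Set (Set (EuclideanSpace ℝ (Fin n))))
    (B : Set (EuclideanSpace ℝ (Fin n))) : ℕ :=
  sInf {d : ℕ | ∃ f : {R : Set (EuclideanSpace ℝ (Fin n)) // IsRegion A R} → (Fin d → ℝ),
    ∀ R₁ R₂, regLE A B R₁.1 R₂.1 ↔ ∀ i, f R₁ i ≤ f R₂ i}

/-- The rank-two subarrangement of `A` consisting of all hyperplanes of `A`
containing `H₁ ∩ H₂`. -/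
def pencil (A : Set (Set (EuclideanSpace ℝ (Fin n)))) (H₁ H₂ : Set (EuclideanSpace ℝ (Fin n))) :
    Set (Set (EuclideanSpace ℝ (Fin n))) :=
  {H | H ∈ A ∧ H₁ ∩ H₂ ⊆ H}

/-- `H` is basic in the subarrangement `A'` relative to the base region `B`:
`H ∈ A'` and `H` bounds (meets in codimension one) the region `B'` of `A'` containing `B`. -/
def IsBasicIn (A' : Set (Set (EuclideanSpace ℝ (Fin n)))) (B H : Set (EuclideanSpace ℝ (Fin n))) :
    Prop :=
  H ∈ A' ∧ ∃ B', IsRegion A' B' ∧ B ⊆ B' ∧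
    Submodule.span ℝ (H ∩ B') = Submodule.span ℝ H

/-- The edge relation of the basic digraph 𝒟(𝒜,B): `H₁ → H₂` whenever `H₁` is basic in the
rank-two subarrangement consisting of all hyperplanes of `A` containing `H₁ ∩ H₂`. -/
def BasicEdge (A : Set (Set (EuclideanSpace ℝ (Fin n))))
    (B H₁ H₂ : Set (EuclideanSpace ℝ (Fin n))) : Prop :=
  H₁ ∈ A ∧ H₂ ∈ A ∧ H₁ ≠ H₂ ∧ IsBasicIn (pencil A H₁ H₂) B H₁

/-- The edge relation of the basic graph G(𝒜,B): `{H₁, H₂}` is an edge whenever `H₁` and `H₂`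
are the two basic hyperplanes of the rank-two subarrangement they determine. -/
def GEdge (A : Set (Set (EuclideanSpace ℝ (Fin n))))
    (B H₁ H₂ : Set (EuclideanSpace ℝ (Fin n))) : Prop :=
  H₁ ∈ A ∧ H₂ ∈ A ∧ H₁ ≠ H₂ ∧
    IsBasicIn (pencil A H₁ H₂) B H₁ ∧ IsBasicIn (pencil A H₁ H₂) B H₂

/-- The edge relation of the digraph 𝒬(𝒜,B): `H₁ → H₂` whenever `H₁` is basic and `H₂` is
non-basic in the rank-two subarrangement they determine. -/
def QEdge (A : Set (Set (EuclideanSpace ℝ (Fin n))))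
    (B H₁ H₂ : Set (EuclideanSpace ℝ (Fin n))) : Prop :=
  H₁ ∈ A ∧ H₂ ∈ A ∧ H₁ ≠ H₂ ∧
    IsBasicIn (pencil A H₁ H₂) B H₁ ∧ ¬ IsBasicIn (pencil A H₁ H₂) B H₂

/-- The chromatic number of the basic graph G(𝒜,B): the least number of colors in a proper
vertex coloring. -/
def basicGraphChromaticNumber (A : Set (Set (EuclideanSpace ℝ (Fin n))))
    (B : Set (EuclideanSpace ℝ (Fin n))) : ℕ :=
  sInf {c : ℕ | ∃ κ : Set (EuclideanSpace ℝ (Fin n)) → Fin c,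
    ∀ H₁ H₂, GEdge A B H₁ H₂ → κ H₁ ≠ κ H₂}

section MyHelpers

variable {A : Set (Set (EuclideanSpace ℝ (Fin n)))} {R B : Set (EuclideanSpace ℝ (Fin n))}

lemma ker_subset_smul {v u : EuclideanSpace ℝ (Fin n)} (hv : v ≠ 0)
    (h : {x : EuclideanSpace ℝ (Fin n) | ⟪v, x⟫ = 0} ⊆ {x | ⟪u, x⟫ = 0}) :
    ∃ μ : ℝ, u = μ • v := by
  refine ⟨⟪v, u⟫ / ‖v‖ ^ 2, ?_⟩
  set μ : ℝ := ⟪v, u⟫ / ‖v‖ ^ 2 with hμ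
  have hvn : ‖v‖ ^ 2 ≠ 0 := by
    simpa using hv
  have hz : ⟪v, u - μ • v⟫ = 0 := by
    rw [inner_sub_right, real_inner_smul_right, real_inner_self_eq_norm_sq, hμ]
    field_simp
    ring
  have hz2 : ⟪u, u - μ • v⟫ = 0 := h hz
  have hzz : ⟪u - μ • v, u - μ • v⟫ = (0:ℝ) := by
    rw [inner_sub_left, real_inner_smul_left, hz, hz2]
    ring
  have := inner_self_eq_zero.mp hzz
  exact sub_eq_zero.mp this

lemma inner_continuous (v : EuclideanSpace ℝ (Fin n)) :
    Continuous fun x : EuclideanSpace ℝ (Fin n) => ⟪v, x⟫ :=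
  continuous_const.inner continuous_id

lemma hyperplane_isClosed {H : Set (EuclideanSpace ℝ (Fin n))} (h : IsHyperplane H) :
    IsClosed H := by
  obtain ⟨v, hv, rfl⟩ := h
  exact isClosed_eq (inner_continuous v) continuous_const

lemma arrComplement_isOpen (hA : IsCentralArrangement A) : IsOpen (arrComplement A) := by
  rw [arrComplement, isOpen_compl_iff]
  exact Set.Finite.isClosed_biUnion hA.1 fun H hH => hyperplane_isClosed (hA.2.2 H hH)

lemma arrComplement_anti {P : Set (Set (EuclideanSpace ℝ (Fin n)))} (h : P ⊆ A) :
    arrComplement A ⊆ arrComplement P :=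
  Set.compl_subset_compl.2 (Set.biUnion_subset_biUnion_left h)

lemma notmem_of_arrComplement {x : EuclideanSpace ℝ (Fin n)} {H : Set (EuclideanSpace ℝ (Fin n))}
    (hx : x ∈ arrComplement A) (hH : H ∈ A) : x ∉ H := by
  intro hxH
  exact hx (Set.mem_biUnion hH hxH)

lemma region_spec (hA : IsCentralArrangement A) (hR : IsRegion A R) :
    ∃ U : Set (EuclideanSpace ℝ (Fin n)), IsOpen U ∧ IsPreconnected U ∧ U.Nonempty ∧
      U ⊆ arrComplement A ∧ R = closure U ∧ U ⊆ interior R ∧ interior R ⊆ closure U ∧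
      IsPreconnected (interior R) ∧
      (∀ ⦃s : Set (EuclideanSpace ℝ (Fin n))⦄, IsPreconnected s → s ⊆ arrComplement A →
        (∃ y, y ∈ s ∧ y ∈ U) → s ⊆ U) := by
  obtain ⟨x, hx, hRe⟩ := hR
  set U := connectedComponentIn (arrComplement A) x with hU
  have hUo : IsOpen U := (arrComplement_isOpen hA).connectedComponentIn
  have hUp : IsPreconnected U := isPreconnected_connectedComponentIn
  have hUn : U.Nonempty := ⟨x, mem_connectedComponentIn hx⟩
  have hUsub : U ⊆ arrComplement A := connectedComponentIn_subset _ _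
  have hUiR : U ⊆ interior R := by
    apply interior_maximal _ hUo
    rw [hRe]; exact subset_closure
  have hiRc : interior R ⊆ closure U := by
    rw [hRe]; exact interior_subset
  refine ⟨U, hUo, hUp, hUn, hUsub, hRe, hUiR, hiRc, hUp.subset_closure hUiR hiRc, ?_⟩
  rintro s hs hssub ⟨y, hys, hyU⟩
  have h1 : connectedComponentIn (arrComplement A) x = connectedComponentIn (arrComplement A) y :=
    connectedComponentIn_eq hyU
  rw [hU, h1]
  exact hs.subset_connectedComponentIn hys hssub

lemma interior_region_nonempty (hA : IsCentralArrangement A) (hR : IsRegion A R) :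
    (interior R).Nonempty := by
  obtain ⟨U, _, _, ⟨y, hy⟩, _, _, hUiR, _⟩ := region_spec hA hR
  exact ⟨y, hUiR hy⟩

lemma region_sign_dichotomy (hA : IsCentralArrangement A) (hR : IsRegion A R)
    {H : Set (EuclideanSpace ℝ (Fin n))} (hH : H ∈ A) {v : EuclideanSpace ℝ (Fin n)}
    (hv : v ≠ 0) (hHv : H = {x | ⟪v, x⟫ = 0}) :
    (∀ x ∈ interior R, 0 < ⟪v, x⟫) ∨ (∀ x ∈ interior R, ⟪v, x⟫ < 0) := by
  obtain ⟨U, hUo, hUp, hUn, hUsub, hRe, hUiR, hiRc, hiRp, _⟩ := region_spec hA hR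
  have key : ∀ w : EuclideanSpace ℝ (Fin n), w ≠ 0 → U ⊆ {x | 0 < ⟪w, x⟫} →
      ∀ x ∈ interior R, 0 < ⟪w, x⟫ := by
    intro w hw hUpos x hx
    have hcl : closure U ⊆ {x | 0 ≤ ⟪w, x⟫} :=
      closure_minimal (fun y hy => Set.mem_setOf_eq ▸ le_of_lt (hUpos hy))
        (isClosed_le continuous_const (inner_continuous w))
    have hge : ∀ y ∈ interior R, 0 ≤ ⟪w, y⟫ := fun y hy => hcl (hiRc hy)
    obtain ⟨ε, hε, hball⟩ := Metric.isOpen_iff.1 isOpen_interior x hx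
    have hwn : (0:ℝ) < ‖w‖ := norm_pos_iff.2 hw
    set c : ℝ := ε / (2 * ‖w‖) with hc
    have hcpos : 0 < c := by positivity
    have hy : x - c • w ∈ interior R := by
      apply hball
      rw [Metric.mem_ball, dist_eq_norm]
      have : x - c • w - x = -(c • w) := by abel
      rw [this, norm_neg, norm_smul, Real.norm_eq_abs, abs_of_pos hcpos, hc]
      rw [div_mul_eq_mul_div]
      rw [div_lt_iff₀ (by positivity)]
      nlinarith
    have h0 : 0 ≤ ⟪w, x - c • w⟫ := hge _ hy
    rw [inner_sub_right, real_inner_smul_right, real_inner_self_eq_norm_sq] at h0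
    nlinarith [mul_pos hcpos (pow_pos hwn 2)]
  have hUor : U ⊆ {x | 0 < ⟪v, x⟫} ∪ {x | ⟪v, x⟫ < 0} := by
    intro y hy
    have : y ∉ H := notmem_of_arrComplement (hUsub hy) hH
    rw [hHv] at this
    rcases lt_or_gt_of_ne (Ne.symm this) with h | h
    · exact Or.inl (Set.mem_setOf_eq ▸ h)
    · exact Or.inr (Set.mem_setOf_eq ▸ h)
  have hdisj : Disjoint {x : EuclideanSpace ℝ (Fin n) | 0 < ⟪v, x⟫} {x | ⟪v, x⟫ < 0} := by
    rw [Set.disjoint_left]; intro a ha ha'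
    simp only [Set.mem_setOf_eq] at ha ha'
    linarith
  rcases hUp.subset_or_subset (isOpen_lt continuous_const (inner_continuous v))
      (isOpen_lt (inner_continuous v) continuous_const) hdisj hUor with h | h
  · exact Or.inl (key v hv h)
  · right
    intro x hx
    have hneg : ∀ x ∈ interior R, 0 < ⟪-v, x⟫ := by
      apply key (-v) (neg_ne_zero.2 hv)
      intro y hy
      have := h hy
      simp only [Set.mem_setOf_eq, inner_neg_left] at *
      linarith
    have := hneg x hx
    rw [inner_neg_left] at this
    linarith

lemma interior_region_subset_arrComplement (hA : IsCentralArrangement A) (hR : IsRegion A R) :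
    interior R ⊆ arrComplement A := by
  intro x hx hmem
  simp only [Set.mem_iUnion] at hmem
  obtain ⟨H, hH, hxH⟩ := hmem
  obtain ⟨v, hv, hHv⟩ := hA.2.2 H hH
  rcases region_sign_dichotomy hA hR hH hv hHv with h | h
  · have := h x hx
    rw [hHv] at hxH
    simp only [Set.mem_setOf_eq] at hxH
    linarith
  · have := h x hx
    rw [hHv] at hxH
    simp only [Set.mem_setOf_eq] at hxH
    linarith

end MyHelpers


section MyHelpers2

variable {A : Set (Set (EuclideanSpace ℝ (Fin n)))} {R B : Set (EuclideanSpace ℝ (Fin n))}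

lemma separates_iff_pos (hA : IsCentralArrangement A) (hB : IsRegion A B) (hR : IsRegion A R)
    {p q : EuclideanSpace ℝ (Fin n)} (hp : p ∈ interior B) (hq : q ∈ interior R)
    {H : Set (EuclideanSpace ℝ (Fin n))} (hH : H ∈ A) {v : EuclideanSpace ℝ (Fin n)}
    (hv : v ≠ 0) (hHv : H = {x | ⟪v, x⟫ = 0}) (hvp : ⟪v, p⟫ < 0) :
    Separates H R B ↔ 0 < ⟪v, q⟫ := by
  constructor
  · rintro ⟨u, hu, hHu, hpos, hneg⟩
    have hsub : {x : EuclideanSpace ℝ (Fin n) | ⟪v, x⟫ = 0} ⊆ {x | ⟪u, x⟫ = 0} := by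
      rw [← hHv, ← hHu]
    obtain ⟨μ, hμ⟩ := ker_subset_smul hv hsub
    have hμ0 : μ ≠ 0 := by
      rintro rfl; rw [zero_smul] at hμ; exact hu hμ
    have hup : ⟪u, p⟫ < 0 := hneg p hp
    have huq : 0 < ⟪u, q⟫ := hpos q hq
    rw [hμ, real_inner_smul_left] at hup huq
    have hμpos : 0 < μ := by nlinarith
    nlinarith
  · intro hposq
    refine ⟨v, hv, hHv, ?_, ?_⟩
    · rcases region_sign_dichotomy hA hR hH hv hHv with h | h
      · exact h
      · exact absurd (h q hq) (by linarith)
    · rcases region_sign_dichotomy hA hB hH hv hHv with h | h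
      · exact absurd (h p hp) (by linarith)
      · exact h

lemma sepSet_subset (B R : Set (EuclideanSpace ℝ (Fin n))) : sepSet A B R ⊆ A :=
  fun _ h => h.1

end MyHelpers2

section Geo

variable {A : Set (Set (EuclideanSpace ℝ (Fin n)))}
variable {B R₁ R₂ H H' : Set (EuclideanSpace ℝ (Fin n))}

set_option maxHeartbeats 1000000 in
lemma geo (hA : IsCentralArrangement A) (hB : IsRegion A B)
    (hR₁ : IsRegion A R₁) (hR₂ : IsRegion A R₂)
    (hH : H ∈ A) (hH' : H' ∈ A) (hne : H ≠ H')
    (h1 : H ∈ sepSet A B R₁) (h2 : H ∉ sepSet A B R₂)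
    (h3 : H' ∈ sepSet A B R₂) (h4 : H' ∉ sepSet A B R₁) :
    ∃ b b' : Set (EuclideanSpace ℝ (Fin n)),
      b ∈ pencil A H H' ∧ b' ∈ pencil A H H' ∧ b ≠ b' ∧
      IsBasicIn (pencil A H H') B b ∧ IsBasicIn (pencil A H H') B b' ∧
      (b ∈ sepSet A B R₁ ∧ b ∉ sepSet A B R₂) ∧
      (b' ∈ sepSet A B R₂ ∧ b' ∉ sepSet A B R₁) ∧
      (∀ K, IsBasicIn (pencil A H H') B K → K = b ∨ K = b') ∧
      (∀ K₁ K₂, K₁ ∈ pencil A H H' → K₂ ∈ pencil A H H' → K₁ ≠ K₂ →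
        pencil A K₁ K₂ = pencil A H H') := by
  classical
  set P : Set (Set (EuclideanSpace ℝ (Fin n))) := pencil A H H' with hPdef
  have hPsubA : P ⊆ A := fun K hK => hK.1
  have hHP : H ∈ P := ⟨hH, Set.inter_subset_left⟩
  have hH'P : H' ∈ P := ⟨hH', Set.inter_subset_right⟩
  obtain ⟨p, hp⟩ := interior_region_nonempty hA hB
  have hpA : p ∈ arrComplement A := interior_region_subset_arrComplement hA hB hp
  -- normals, normalized to have inner product -1 with p
  have hnorm : ∀ K : Set (EuclideanSpace ℝ (Fin n)), ∃ v : EuclideanSpace ℝ (Fin n),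
      K ∈ P → (v ≠ 0 ∧ K = {x | ⟪v, x⟫ = 0} ∧ ⟪v, p⟫ < 0) := by
    intro K
    by_cases hK : K ∈ P
    · obtain ⟨v, hv, hKv⟩ := hA.2.2 K hK.1
      have hpK : p ∉ K := notmem_of_arrComplement hpA hK.1
      have hvp : ⟪v, p⟫ ≠ 0 := by
        intro h
        exact hpK (by rw [hKv]; exact h)
      rcases hvp.lt_or_gt with hlt | hgt
      · exact ⟨v, fun _ => ⟨hv, hKv, hlt⟩⟩
      · refine ⟨-v, fun _ => ⟨neg_ne_zero.2 hv, ?_, ?_⟩⟩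
        · rw [hKv]; ext x; simp [inner_neg_left, neg_eq_zero]
        · rw [inner_neg_left]; linarith
    · exact ⟨0, fun h => absurd h hK⟩
  choose u hu using hnorm
  obtain ⟨s, hsdef⟩ : ∃ s : Set (EuclideanSpace ℝ (Fin n)) → EuclideanSpace ℝ (Fin n),
      ∀ K, s K = (-⟪u K, p⟫)⁻¹ • u K := ⟨_, fun _ => rfl⟩
  have hsp : ∀ K ∈ P, ⟪s K, p⟫ = -1 := by
    intro K hK
    obtain ⟨hv, hKv, hvp⟩ := hu K hK
    have hne0 : ⟪u K, p⟫ ≠ 0 := ne_of_lt hvp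
    rw [hsdef K, real_inner_smul_left, inv_neg, neg_mul, inv_mul_cancel₀ hne0]
  have hker : ∀ K ∈ P, K = {x | ⟪s K, x⟫ = 0} := by
    intro K hK
    obtain ⟨hv, hKv, hvp⟩ := hu K hK
    have hc : (-⟪u K, p⟫)⁻¹ ≠ 0 := inv_ne_zero (by linarith)
    ext x
    simp only [Set.mem_setOf_eq, hsdef K, real_inner_smul_left]
    constructor
    · intro hx
      have hx0 : ⟪u K, x⟫ = 0 := by rw [hKv] at hx; exact hx
      rw [hx0, mul_zero]
    · intro hx
      rcases mul_eq_zero.1 hx with h | h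
      · exact absurd h hc
      · rw [hKv]; exact h
  have hs0 : ∀ K ∈ P, s K ≠ 0 := by
    intro K hK h
    have := hsp K hK
    rw [h, inner_zero_left] at this
    norm_num at this
  -- all normals live in the 2-dim span
  haveI : FiniteDimensional ℝ
      ↥(Submodule.span ℝ ({s H, s H'} : Set (EuclideanSpace ℝ (Fin n)))) :=
    FiniteDimensional.span_of_finite ℝ (Set.toFinite _)
  have hWmem : ∀ K ∈ P, s K ∈ Submodule.span ℝ ({s H, s H'} :
      Set (EuclideanSpace ℝ (Fin n))) := by
    intro K hK
    rw [← Submodule.orthogonal_orthogonal (Submodule.span ℝ {s H, s H'})]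
    rw [Submodule.mem_orthogonal]
    intro y hy
    have hyH : ⟪s H, y⟫ = 0 :=
      hy (s H) (Submodule.subset_span (by simp))
    have hyH' : ⟪s H', y⟫ = 0 :=
      hy (s H') (Submodule.subset_span (by simp))
    have hyK : y ∈ K := hK.2 ⟨by rw [hker H hHP]; exact hyH, by rw [hker H' hH'P]; exact hyH'⟩
    have hz : ⟪s K, y⟫ = 0 := by rw [hker K hK] at hyK; exact hyK
    rw [real_inner_comm] at hz
    exact hz
  obtain ⟨d, hddef⟩ : ∃ d : EuclideanSpace ℝ (Fin n), d = s H' - s H := ⟨_, rfl⟩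
  have hdp : ⟪d, p⟫ = 0 := by
    rw [hddef, inner_sub_left, hsp H hHP, hsp H' hH'P]; ring
  have hd0 : d ≠ 0 := by
    intro h
    rw [hddef] at h
    have hss : s H' = s H := sub_eq_zero.1 h
    exact hne (by rw [hker H hHP, hker H' hH'P, hss])
  -- the line parameter
  have ht_ex : ∀ K : Set (EuclideanSpace ℝ (Fin n)), ∃ t : ℝ, K ∈ P → s K = s H + t • d := by
    intro K
    by_cases hK : K ∈ P
    · obtain ⟨a, b, hab⟩ := Submodule.mem_span_pair.1 (hWmem K hK)
      have hrel : a + b = 1 := by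
        have h := hsp K hK
        rw [← hab, inner_add_left, real_inner_smul_left, real_inner_smul_left,
          hsp H hHP, hsp H' hH'P] at h
        linarith
      refine ⟨b, fun _ => ?_⟩
      rw [← hab, hddef]
      have ha : a = 1 - b := by linarith
      rw [ha]
      module
    · exact ⟨0, fun h => absurd h hK⟩
  choose t ht using ht_ex
  have hlin : ∀ K ∈ P, ∀ x, ⟪s K, x⟫ = ⟪s H, x⟫ + t K * ⟪d, x⟫ := by
    intro K hK x
    rw [ht K hK, inner_add_left, real_inner_smul_left]
  have tinj : ∀ K ∈ P, ∀ J ∈ P, t K = t J → K = J := by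
    intro K hK J hJ hT
    have hss : s K = s J := by rw [ht K hK, ht J hJ, hT]
    rw [hker K hK, hker J hJ, hss]
  -- finite pencil, min and max
  set PF : Finset (Set (EuclideanSpace ℝ (Fin n))) := hA.1.toFinset.filter (· ∈ P) with hPFdef
  have hPF : ∀ K, K ∈ PF ↔ K ∈ P := by
    intro K
    rw [hPFdef, Finset.mem_filter, Set.Finite.mem_toFinset]
    exact ⟨fun h => h.2, fun h => ⟨hPsubA h, h⟩⟩
  obtain ⟨bmin, hbminPF, hbminle⟩ := PF.exists_min_image t ⟨H, (hPF H).2 hHP⟩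
  obtain ⟨bmax, hbmaxPF, hbmaxge⟩ := PF.exists_max_image t ⟨H, (hPF H).2 hHP⟩
  have hbminP : bmin ∈ P := (hPF bmin).1 hbminPF
  have hbmaxP : bmax ∈ P := (hPF bmax).1 hbmaxPF
  have htle : ∀ K ∈ P, t bmin ≤ t K := fun K hK => hbminle K ((hPF K).2 hK)
  have htge : ∀ K ∈ P, t K ≤ t bmax := fun K hK => hbmaxge K ((hPF K).2 hK)
  -- interior points of the two regions
  obtain ⟨q₁, hq₁⟩ := interior_region_nonempty hA hR₁
  obtain ⟨q₂, hq₂⟩ := interior_region_nonempty hA hR₂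
  -- separation criterion
  have hsep : ∀ K ∈ P, ∀ (R0 : Set (EuclideanSpace ℝ (Fin n))), IsRegion A R0 →
      ∀ q ∈ interior R0, (K ∈ sepSet A B R0 ↔ 0 < ⟪s K, q⟫) := by
    intro K hK R0 hR0 q hq
    have hss := separates_iff_pos hA hB hR0 hp hq (hPsubA hK) (hs0 K hK) (hker K hK)
      (by rw [hsp K hK]; norm_num)
    exact ⟨fun hm => hss.1 hm.2, fun hpos => ⟨hPsubA hK, hss.2 hpos⟩⟩
  -- the coordinates of the two interior points
  have e1 : 0 < ⟪s H, q₁⟫ + t H * ⟪d, q₁⟫ := by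
    have h := (hsep H hHP R₁ hR₁ q₁ hq₁).1 h1
    rw [hlin H hHP q₁] at h; exact h
  have e2 : ⟪s H, q₂⟫ + t H * ⟪d, q₂⟫ ≤ 0 := by
    have h : ¬ (0 < ⟪s H, q₂⟫) := fun hc => h2 ((hsep H hHP R₂ hR₂ q₂ hq₂).2 hc)
    rw [hlin H hHP q₂] at h; linarith
  have e3 : 0 < ⟪s H, q₂⟫ + t H' * ⟪d, q₂⟫ := by
    have h := (hsep H' hH'P R₂ hR₂ q₂ hq₂).1 h3
    rw [hlin H' hH'P q₂] at h; exact h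
  have e4 : ⟪s H, q₁⟫ + t H' * ⟪d, q₁⟫ ≤ 0 := by
    have h : ¬ (0 < ⟪s H', q₁⟫) := fun hc => h4 ((hsep H' hH'P R₁ hR₁ q₁ hq₁).2 hc)
    rw [hlin H' hH'P q₁] at h; linarith
  have tne : t H ≠ t H' := fun h => hne (tinj H hHP H' hH'P h)
  -- the base chamber of the pencil
  set C : Set (EuclideanSpace ℝ (Fin n)) := {x | ∀ K ∈ P, ⟪s K, x⟫ < 0} with hCdef
  set Bp : Set (EuclideanSpace ℝ (Fin n)) := {x | ∀ K ∈ P, ⟪s K, x⟫ ≤ 0} with hBpdef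
  have hCeq : C = ⋂ K ∈ PF, {x | ⟪s K, x⟫ < 0} := by
    ext x
    simp only [hCdef, Set.mem_setOf_eq, Set.mem_iInter]
    exact ⟨fun h K hK => h K ((hPF K).1 hK), fun h K hK => h K ((hPF K).2 hK)⟩
  have hCopen : IsOpen C := by
    rw [hCeq]
    exact isOpen_biInter_finset fun K _ => isOpen_lt (inner_continuous (s K)) continuous_const
  have hCconv : Convex ℝ C := by
    rw [hCeq]
    apply convex_iInter₂
    intro K _
    exact convex_halfSpace_lt
      ⟨fun x y => inner_add_right _ _ _, fun c x => by
        rw [real_inner_smul_right, smul_eq_mul]⟩ 0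
  have hCsub : C ⊆ arrComplement P := by
    intro x hx hmem
    simp only [Set.mem_iUnion] at hmem
    obtain ⟨K, hK, hxK⟩ := hmem
    have h1' := hx K hK
    rw [hker K hK] at hxK
    simp only [Set.mem_setOf_eq] at hxK
    linarith
  have hpC : p ∈ C := fun K hK => by rw [hsp K hK]; norm_num
  have hpP : p ∈ arrComplement P := arrComplement_anti hPsubA hpA
  have hcomp : connectedComponentIn (arrComplement P) p = C := by
    apply Set.Subset.antisymm
    · intro x hx
      intro K hK
      have hVor : connectedComponentIn (arrComplement P) p ⊆
          {y | 0 < ⟪s K, y⟫} ∪ {y | ⟪s K, y⟫ < 0} := by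
        intro y hy
        have hyc : y ∉ K := notmem_of_arrComplement (connectedComponentIn_subset _ _ hy) hK
        rw [hker K hK] at hyc
        simp only [Set.mem_setOf_eq] at hyc
        rcases lt_or_gt_of_ne (Ne.symm hyc) with h | h
        · exact Or.inl (Set.mem_setOf_eq ▸ h)
        · exact Or.inr (Set.mem_setOf_eq ▸ h)
      have hdisj : Disjoint {y : EuclideanSpace ℝ (Fin n) | 0 < ⟪s K, y⟫}
          {y | ⟪s K, y⟫ < 0} := by
        rw [Set.disjoint_left]; intro a ha ha'
        simp only [Set.mem_setOf_eq] at ha ha'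
        linarith
      rcases isPreconnected_connectedComponentIn.subset_or_subset
          (isOpen_lt continuous_const (inner_continuous (s K)))
          (isOpen_lt (inner_continuous (s K)) continuous_const) hdisj hVor with h | h
      · have := h (mem_connectedComponentIn hpP)
        simp only [Set.mem_setOf_eq] at this
        rw [hsp K hK] at this
        norm_num at this
      · exact h hx
    · exact hCconv.isPreconnected.subset_connectedComponentIn hpC hCsub
  have hBpclosed : IsClosed Bp := by
    have : Bp = ⋂ K ∈ P, {x | ⟪s K, x⟫ ≤ 0} := by
      ext x
      simp only [hBpdef, Set.mem_setOf_eq, Set.mem_iInter]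
    rw [this]
    exact isClosed_biInter fun K _ => isClosed_le (inner_continuous (s K)) continuous_const
  have hclosureC : closure C = Bp := by
    apply Set.Subset.antisymm
    · exact closure_minimal (fun x hx K hK => le_of_lt (hx K hK)) hBpclosed
    · intro x hx
      apply mem_closure_of_tendsto (f := fun m : ℕ => x + ((1:ℝ)/(m+1)) • (p - x))
        (b := Filter.atTop)
      · have h0 := tendsto_one_div_add_atTop_nhds_zero_nat (𝕜 := ℝ)
        have h1' := (h0.smul_const (p - x)).const_add x
        simpa using h1'
      · apply Filter.Eventually.of_forall
        intro m
        intro K hK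
        have hm0 : (0:ℝ) < 1/(m+1) := by positivity
        have hm1 : (1:ℝ)/(m+1) ≤ 1 := by
          rw [div_le_one (by positivity)]
          norm_num
        have hXle : ⟪s K, x⟫ ≤ 0 := hx K hK
        rw [inner_add_right, real_inner_smul_right, inner_sub_right, hsp K hK]
        nlinarith
  have hregBp : IsRegion P Bp := ⟨p, hpP, by rw [hcomp, hclosureC]⟩
  have hBsubBp : B ⊆ Bp := by
    obtain ⟨U, hUo, hUp, hUn, hUsub, hBe, hUiB, hiBc, hiBp, hUmax⟩ := region_spec hA hB
    have hintB : interior B ⊆ U := by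
      apply hUmax hiBp (interior_region_subset_arrComplement hA hB)
      obtain ⟨y, hy⟩ := hUn
      exact ⟨y, hUiB hy, hy⟩
    have hpU : p ∈ U := hintB hp
    have hUC : U ⊆ C := by
      have hsubc : U ⊆ connectedComponentIn (arrComplement P) p :=
        hUp.subset_connectedComponentIn hpU (hUsub.trans (arrComplement_anti hPsubA))
      rw [hcomp] at hsubc; exact hsubc
    rw [hBe, ← hclosureC]
    exact closure_mono hUC
  have huniqB' : ∀ B'', IsRegion P B'' → B ⊆ B'' → B'' = Bp := by
    rintro B'' ⟨y, hy, rfl⟩ hsub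
    have hpB'' : p ∈ closure (connectedComponentIn (arrComplement P) y) :=
      hsub (interior_subset hp)
    obtain ⟨z, hzC, hzy⟩ := (_root_.mem_closure_iff.1 hpB'') C hCopen hpC
    have hy1 : connectedComponentIn (arrComplement P) y
        = connectedComponentIn (arrComplement P) z := connectedComponentIn_eq hzy
    have hy2 : connectedComponentIn (arrComplement P) p
        = connectedComponentIn (arrComplement P) z :=
      connectedComponentIn_eq (by rw [hcomp]; exact hzC)
    rw [hy1, ← hy2, hcomp, hclosureC]
  -- the two extreme hyperplanes are basic
  have hbasic : ∀ K ∈ P, (∀ J ∈ P, t K ≤ t J) ∨ (∀ J ∈ P, t J ≤ t K) → IsBasicIn P B K := by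
    intro K hK hext
    refine ⟨hK, Bp, hregBp, hBsubBp, ?_⟩
    apply le_antisymm (Submodule.span_mono Set.inter_subset_left)
    rw [Submodule.span_le]
    intro x hx
    have hx0 : ⟪s K, x⟫ = 0 := by
      rw [hker K hK] at hx; exact hx
    have hxlin : ∀ J ∈ P, ⟪s J, x⟫ = (t J - t K) * ⟪d, x⟫ := by
      intro J hJ
      have hKx := hlin K hK x
      have hJx := hlin J hJ x
      rw [hx0] at hKx
      have hax : ⟪s H, x⟫ = -(t K * ⟪d, x⟫) := by linarith
      rw [hJx, hax]; ring
    have hmem : ∀ y : EuclideanSpace ℝ (Fin n), y ∈ K → (∀ J ∈ P, (t J - t K) * ⟪d, y⟫ ≤ 0) →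
        y ∈ (Submodule.span ℝ (K ∩ Bp) : Submodule ℝ (EuclideanSpace ℝ (Fin n))) := by
      intro y hyK hy
      apply Submodule.subset_span
      refine ⟨hyK, ?_⟩
      intro J hJ
      have hy0 : ⟪s K, y⟫ = 0 := by rw [hker K hK] at hyK; exact hyK
      have hylin : ⟪s J, y⟫ = (t J - t K) * ⟪d, y⟫ := by
        have hKy := hlin K hK y
        have hJy := hlin J hJ y
        rw [hy0] at hKy
        have hay : ⟪s H, y⟫ = -(t K * ⟪d, y⟫) := by linarith
        rw [hJy, hay]; ring
      rw [hylin]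
      exact hy J hJ
    have hnegK : -x ∈ K := by
      rw [hker K hK]
      simp only [Set.mem_setOf_eq, inner_neg_right]
      rw [hx0]; ring
    rcases hext with hmin | hmax
    · by_cases hdx : ⟪d, x⟫ ≤ 0
      · exact hmem x hx fun J hJ =>
          mul_nonpos_of_nonneg_of_nonpos (by linarith [hmin J hJ]) hdx
      · push_neg at hdx
        have h1' := hmem (-x) hnegK (fun J hJ => by
          rw [inner_neg_right]
          have : 0 ≤ (t J - t K) * ⟪d, x⟫ :=
            mul_nonneg (by linarith [hmin J hJ]) (le_of_lt hdx)
          linarith)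
        have h2' := Submodule.neg_mem _ h1'
        simpa using h2'
    · by_cases hdx : 0 ≤ ⟪d, x⟫
      · exact hmem x hx fun J hJ =>
          mul_nonpos_of_nonpos_of_nonneg (by linarith [hmax J hJ]) hdx
      · push_neg at hdx
        have h1' := hmem (-x) hnegK (fun J hJ => by
          rw [inner_neg_right]
          have : 0 ≤ (t J - t K) * ⟪d, x⟫ := by nlinarith [hmax J hJ]
          linarith)
        have h2' := Submodule.neg_mem _ h1'
        simpa using h2'
  have hbasicmin : IsBasicIn P B bmin := hbasic bmin hbminP (Or.inl htle)
  have hbasicmax : IsBasicIn P B bmax := hbasic bmax hbmaxP (Or.inr htge)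
  -- any other hyperplane of the pencil is not basic
  have hnotbasic : ∀ K ∈ P, K ≠ bmin → K ≠ bmax → ¬ IsBasicIn P B K := by
    rintro K hK hne1 hne2 ⟨-, B'', hreg, hsub, hspan⟩
    rw [huniqB' B'' hreg hsub] at hspan
    have ht1 : t bmin < t K :=
      lt_of_le_of_ne (htle K hK) fun h => hne1 (tinj K hK bmin hbminP h.symm)
    have ht2 : t K < t bmax :=
      lt_of_le_of_ne (htge K hK) fun h => hne2 (tinj K hK bmax hbmaxP h)
    have hsubker : (K ∩ Bp : Set (EuclideanSpace ℝ (Fin n))) ⊆ {x | ⟪d, x⟫ = 0} := by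
      rintro x ⟨hxK, hxBp⟩
      have hx0 : ⟪s K, x⟫ = 0 := by rw [hker K hK] at hxK; exact hxK
      have hxlin : ∀ J ∈ P, ⟪s J, x⟫ = (t J - t K) * ⟪d, x⟫ := by
        intro J hJ
        have hKx := hlin K hK x
        have hJx := hlin J hJ x
        rw [hx0] at hKx
        have hax : ⟪s H, x⟫ = -(t K * ⟪d, x⟫) := by linarith
        rw [hJx, hax]; ring
      have i1 : (t bmin - t K) * ⟪d, x⟫ ≤ 0 := by
        rw [← hxlin bmin hbminP]; exact hxBp bmin hbminP
      have i2 : (t bmax - t K) * ⟪d, x⟫ ≤ 0 := by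
        rw [← hxlin bmax hbmaxP]; exact hxBp bmax hbmaxP
      have hge : 0 ≤ ⟪d, x⟫ := by nlinarith
      have hle : ⟪d, x⟫ ≤ 0 := by nlinarith
      exact le_antisymm hle hge
    have hx0 : ∃ x ∈ K, ⟪d, x⟫ ≠ 0 := by
      by_contra hq
      push_neg at hq
      have hsubd : {x : EuclideanSpace ℝ (Fin n) | ⟪s K, x⟫ = 0} ⊆ {x | ⟪d, x⟫ = 0} :=
        fun x hx => hq x (by rw [hker K hK]; exact hx)
      obtain ⟨μ, hμ⟩ := ker_subset_smul (hs0 K hK) hsubd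
      have hcalc : ⟪d, p⟫ = μ * ⟪s K, p⟫ := by rw [hμ, real_inner_smul_left]
      rw [hdp, hsp K hK] at hcalc
      have hμ0 : μ = 0 := by linarith
      rw [hμ0, zero_smul] at hμ
      exact hd0 hμ
    obtain ⟨x, hxK, hdx⟩ := hx0
    have hxspanK : x ∈ Submodule.span ℝ K := Submodule.subset_span hxK
    rw [← hspan] at hxspanK
    have hle : Submodule.span ℝ (K ∩ Bp) ≤ (Submodule.span ℝ
        ({d} : Set (EuclideanSpace ℝ (Fin n))))ᗮ := by
      rw [Submodule.span_le]
      intro y hy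
      rw [SetLike.mem_coe, Submodule.mem_orthogonal]
      intro w hw
      obtain ⟨c, rfl⟩ := Submodule.mem_span_singleton.1 hw
      rw [real_inner_smul_left]
      have := hsubker hy
      simp only [Set.mem_setOf_eq] at this
      rw [this, mul_zero]
    have hxorth := hle hxspanK
    have := (Submodule.mem_orthogonal _ x).1 hxorth d (Submodule.mem_span_singleton_self d)
    exact hdx this
  -- pencil stability
  have hstab : ∀ K₁ K₂, K₁ ∈ P → K₂ ∈ P → K₁ ≠ K₂ → pencil A K₁ K₂ = P := by
    intro K₁ K₂ hk1 hk2 hne12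
    have hinter : K₁ ∩ K₂ = H ∩ H' := by
      apply Set.Subset.antisymm
      · rintro x ⟨hx1, hx2⟩
        have f1 : ⟪s K₁, x⟫ = 0 := by rw [hker K₁ hk1] at hx1; exact hx1
        have f2 : ⟪s K₂, x⟫ = 0 := by rw [hker K₂ hk2] at hx2; exact hx2
        rw [hlin K₁ hk1 x] at f1
        rw [hlin K₂ hk2 x] at f2
        have htne12 : t K₁ ≠ t K₂ := fun h => hne12 (tinj K₁ hk1 K₂ hk2 h)
        have hz : (t K₁ - t K₂) * ⟪d, x⟫ = 0 := by linarith
        have hdx : ⟪d, x⟫ = 0 := by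
          rcases mul_eq_zero.1 hz with h | h
          · exact absurd (sub_eq_zero.1 h) htne12
          · exact h
        have hHx : ⟪s H, x⟫ = 0 := by rw [hdx] at f1; linarith
        constructor
        · rw [hker H hHP]; exact hHx
        · rw [hker H' hH'P]
          show ⟪s H', x⟫ = 0
          rw [hlin H' hH'P x, hHx, hdx]; ring
      · intro x hx
        exact ⟨hk1.2 hx, hk2.2 hx⟩
    show pencil A K₁ K₂ = pencil A H H'
    unfold pencil
    rw [hinter]
  -- final case analysis on the relative position of t H and t H'
  rcases tne.lt_or_gt with hlt | hlt
  · -- t H < t H' : bmin is on the R₁ side, bmax on the R₂ side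
    have hb1 : ⟪d, q₁⟫ < 0 := by nlinarith
    have hb2 : 0 < ⟪d, q₂⟫ := by nlinarith
    have m1 : bmin ∈ sepSet A B R₁ := by
      apply (hsep bmin hbminP R₁ hR₁ q₁ hq₁).2
      rw [hlin bmin hbminP q₁]
      nlinarith [htle H hHP]
    have m2 : bmin ∉ sepSet A B R₂ := by
      intro hm
      have := (hsep bmin hbminP R₂ hR₂ q₂ hq₂).1 hm
      rw [hlin bmin hbminP q₂] at this
      nlinarith [htle H hHP]
    have m3 : bmax ∈ sepSet A B R₂ := by
      apply (hsep bmax hbmaxP R₂ hR₂ q₂ hq₂).2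
      rw [hlin bmax hbmaxP q₂]
      nlinarith [htge H' hH'P]
    have m4 : bmax ∉ sepSet A B R₁ := by
      intro hm
      have := (hsep bmax hbmaxP R₁ hR₁ q₁ hq₁).1 hm
      rw [hlin bmax hbmaxP q₁] at this
      nlinarith [htge H' hH'P]
    have bneq : bmin ≠ bmax := by
      intro h
      have hlt2 : t bmin < t bmax :=
        lt_of_le_of_lt (htle H hHP) (lt_of_lt_of_le hlt (htge H' hH'P))
      rw [h] at hlt2
      exact lt_irrefl _ hlt2
    refine ⟨bmin, bmax, hbminP, hbmaxP, bneq, hbasicmin, hbasicmax, ⟨m1, m2⟩, ⟨m3, m4⟩, ?_, hstab⟩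
    intro K hbas
    by_contra hq
    push_neg at hq
    exact hnotbasic K hbas.1 hq.1 hq.2 hbas
  · -- t H' < t H : bmax is on the R₁ side, bmin on the R₂ side
    have hb1 : 0 < ⟪d, q₁⟫ := by nlinarith
    have hb2 : ⟪d, q₂⟫ < 0 := by nlinarith
    have m1 : bmax ∈ sepSet A B R₁ := by
      apply (hsep bmax hbmaxP R₁ hR₁ q₁ hq₁).2
      rw [hlin bmax hbmaxP q₁]
      nlinarith [htge H hHP]
    have m2 : bmax ∉ sepSet A B R₂ := by
      intro hm
      have := (hsep bmax hbmaxP R₂ hR₂ q₂ hq₂).1 hm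
      rw [hlin bmax hbmaxP q₂] at this
      nlinarith [htge H hHP]
    have m3 : bmin ∈ sepSet A B R₂ := by
      apply (hsep bmin hbminP R₂ hR₂ q₂ hq₂).2
      rw [hlin bmin hbminP q₂]
      nlinarith [htle H' hH'P]
    have m4 : bmin ∉ sepSet A B R₁ := by
      intro hm
      have := (hsep bmin hbminP R₁ hR₁ q₁ hq₁).1 hm
      rw [hlin bmin hbminP q₁] at this
      nlinarith [htle H' hH'P]
    have bneq : bmax ≠ bmin := by
      intro h
      have hlt2 : t bmin < t bmax :=
        lt_of_le_of_lt (htle H' hH'P) (lt_of_lt_of_le hlt (htge H hHP))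
      rw [h] at hlt2
      exact lt_irrefl _ hlt2
    refine ⟨bmax, bmin, hbmaxP, hbminP, bneq, hbasicmax, hbasicmin, ⟨m1, m2⟩, ⟨m3, m4⟩, ?_, hstab⟩
    intro K hbas
    by_contra hq
    push_neg at hq
    exact hnotbasic K hbas.1 hq.2 hq.1 hbas

end Geo

lemma sum_halfpow_lt {T : Finset ℕ} {k : ℕ} (h : ∀ j ∈ T, k < j) :
    ∑ j ∈ T, ((1:ℝ)/2)^j < ((1:ℝ)/2)^k := by
  set m := max (k+1) (T.sup id + 1) with hm
  have hsub : T ⊆ Finset.Ico (k+1) m := by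
    intro j hj
    rw [Finset.mem_Ico]
    refine ⟨h j hj, ?_⟩
    calc j ≤ T.sup id := Finset.le_sup (f := id) hj
    _ < T.sup id + 1 := Nat.lt_succ_self _
    _ ≤ m := le_max_right _ _
  have h1 : ∑ j ∈ T, ((1:ℝ)/2)^j ≤ ∑ j ∈ Finset.Ico (k+1) m, ((1:ℝ)/2)^j :=
    Finset.sum_le_sum_of_subset_of_nonneg hsub (fun i _ _ => by positivity)
  have h2 : ∑ j ∈ Finset.Ico (k+1) m, ((1:ℝ)/2)^j
      = (((1:ℝ)/2)^m - ((1:ℝ)/2)^(k+1)) / ((1:ℝ)/2 - 1) :=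
    geom_sum_Ico (by norm_num) (le_max_left _ _)
  have h3 : (0:ℝ) < ((1:ℝ)/2)^m := by positivity
  have h4 : ((1:ℝ)/2)^(k+1) = ((1:ℝ)/2)^k * (1/2) := pow_succ _ _
  have h5 : (((1:ℝ)/2)^m - ((1:ℝ)/2)^(k+1)) / ((1:ℝ)/2 - 1)
      = 2*(((1:ℝ)/2)^(k+1) - ((1:ℝ)/2)^m) := by ring
  rw [h2, h5] at h1
  nlinarith


/-- **Corollary (Reading, Corollary 8).** If the digraph 𝒬(𝒜,B) is acyclic, then the order
dimension of 𝒫(𝒜,B) is at most the chromatic number of the basic graph G(𝒜,B). -/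
theorem orderDim_le_chromaticNumber {n : ℕ}
    (A : Set (Set (EuclideanSpace ℝ (Fin n)))) (B : Set (EuclideanSpace ℝ (Fin n)))
    (hA : IsCentralArrangement A) (hB : IsRegion A B)
    (hQ : ∀ H, ¬ Relation.TransGen (QEdge A B) H H) :
    regionOrderDim A B ≤ basicGraphChromaticNumber A B := by
  classical
  set AF : Finset (Set (EuclideanSpace ℝ (Fin n))) := hA.1.toFinset with hAFdef
  have hAF : ∀ K, K ∈ AF ↔ K ∈ A := fun K => Set.Finite.mem_toFinset _
  set N : ℕ := AF.card with hNdef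
  have hN : 0 < N := Finset.card_pos.2 (by
    obtain ⟨K, hK⟩ := hA.2.1; exact ⟨K, (hAF K).2 hK⟩)
  -- an injective index on the hyperplanes
  set eIdx : Set (EuclideanSpace ℝ (Fin n)) → ℕ :=
    fun K => if h : K ∈ AF then ((AF.equivFin ⟨K, h⟩ : Fin N) : ℕ) else 0 with heIdxdef
  have heIdx_lt : ∀ K, eIdx K < N := by
    intro K
    rw [heIdxdef]
    dsimp only
    split
    · exact (AF.equivFin ⟨K, by assumption⟩).isLt
    · exact hN
  have heIdx_inj : ∀ K ∈ AF, ∀ K' ∈ AF, eIdx K = eIdx K' → K = K' := by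
    intro K hK K' hK' h
    rw [heIdxdef] at h
    dsimp only at h
    rw [dif_pos hK, dif_pos hK'] at h
    have h2 := Fin.val_injective h
    have h3 := AF.equivFin.injective h2
    exact congrArg Subtype.val h3
  -- rank function compatible with the Q-digraph
  set r0 : Set (EuclideanSpace ℝ (Fin n)) → ℕ :=
    fun K => (AF.filter (fun J => Relation.TransGen (QEdge A B) J K)).card with hr0def
  set r : Set (EuclideanSpace ℝ (Fin n)) → ℕ := fun K => (N+1) * r0 K + eIdx K with hrdef
  have key : ∀ a b x : ℕ, x < N+1 → a < b → (N+1)*a + x < (N+1)*b := by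
    intro a b x hx hab
    calc (N+1)*a + x < (N+1)*a + (N+1) := Nat.add_lt_add_left hx _
    _ = (N+1)*(a+1) := by ring
    _ ≤ (N+1)*b := Nat.mul_le_mul_left _ hab
  have hrQ : ∀ K K', K ∈ A → K' ∈ A → QEdge A B K K' → r K < r K' := by
    intro K K' hKA hK'A hQE
    have hsub : AF.filter (fun J => Relation.TransGen (QEdge A B) J K)
        ⊆ AF.filter (fun J => Relation.TransGen (QEdge A B) J K') := by
      intro J hJ
      rw [Finset.mem_filter] at hJ ⊢
      exact ⟨hJ.1, hJ.2.trans (Relation.TransGen.single hQE)⟩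
    have hmem : K ∈ AF.filter (fun J => Relation.TransGen (QEdge A B) J K') :=
      Finset.mem_filter.2 ⟨(hAF K).2 hKA, Relation.TransGen.single hQE⟩
    have hnotmem : K ∉ AF.filter (fun J => Relation.TransGen (QEdge A B) J K) :=
      fun hmem' => hQ K (Finset.mem_filter.1 hmem').2
    have h5 : r0 K < r0 K' := by
      rw [hr0def]
      exact Finset.card_lt_card ((Finset.ssubset_iff_of_subset hsub).2 ⟨K, hmem, hnotmem⟩)
    calc r K = (N+1) * r0 K + eIdx K := rfl
    _ < (N+1) * r0 K' := key _ _ _ (lt_of_lt_of_le (heIdx_lt K) (Nat.le_succ N)) h5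
    _ ≤ r K' := Nat.le_add_right _ _
  have hrinj : ∀ K ∈ AF, ∀ K' ∈ AF, r K = r K' → K = K' := by
    intro K hK K' hK' h
    have h0 : r0 K = r0 K' := by
      rcases lt_trichotomy (r0 K) (r0 K') with hlt | heq | hgt
      · exfalso
        have := key (r0 K) (r0 K') (eIdx K) (lt_of_lt_of_le (heIdx_lt K) (Nat.le_succ N)) hlt
        have h2 : r K < r K' := lt_of_lt_of_le this (Nat.le_add_right _ _)
        omega
      · exact heq
      · exfalso
        have := key (r0 K') (r0 K) (eIdx K') (lt_of_lt_of_le (heIdx_lt K') (Nat.le_succ N)) hgt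
        have h2 : r K' < r K := lt_of_lt_of_le this (Nat.le_add_right _ _)
        omega
    have h1 : eIdx K = eIdx K' := by
      have : (N+1) * r0 K + eIdx K = (N+1) * r0 K + eIdx K' := by
        rw [hrdef] at h
        dsimp only at h
        rw [h0] at h ⊢
        exact h
      omega
    exact heIdx_inj K hK K' hK' h1
  -- a proper coloring with the chromatic number of colors
  have hχ : ∃ κ : Set (EuclideanSpace ℝ (Fin n)) → Fin (basicGraphChromaticNumber A B),
      ∀ H₁ H₂, GEdge A B H₁ H₂ → κ H₁ ≠ κ H₂ := by
    have hne : {c : ℕ | ∃ κ : Set (EuclideanSpace ℝ (Fin n)) → Fin c,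
        ∀ H₁ H₂, GEdge A B H₁ H₂ → κ H₁ ≠ κ H₂}.Nonempty := by
      refine ⟨N, fun K => ⟨eIdx K, heIdx_lt K⟩, ?_⟩
      intro H₁ H₂ hGE heq
      have h1 : eIdx H₁ = eIdx H₂ := congrArg Fin.val heq
      exact hGE.2.2.1 (heIdx_inj H₁ ((hAF H₁).2 hGE.1) H₂ ((hAF H₂).2 hGE.2.1) h1)
    exact Nat.sInf_mem hne
  obtain ⟨κ, hκ⟩ := hχ
  -- the order embedding given by weighted color counts
  set w : Set (EuclideanSpace ℝ (Fin n)) → ℝ := fun K => ((1:ℝ)/2)^(r K) with hwdef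
  have hw0 : ∀ K, 0 ≤ w K := fun K => by rw [hwdef]; positivity
  apply Nat.sInf_le
  refine ⟨fun R i => ∑ K ∈ AF.filter (fun K => κ K = i ∧ K ∈ sepSet A B R.1), w K, ?_⟩
  intro R₁ R₂
  constructor
  · intro hle i
    apply Finset.sum_le_sum_of_subset_of_nonneg
    · intro K hK
      rw [Finset.mem_filter] at hK ⊢
      exact ⟨hK.1, hK.2.1, hle hK.2.2⟩
    · intro K _ _
      exact hw0 K
  · intro hf
    dsimp only at hf
    by_contra hnot
    obtain ⟨H₀, hH₀1, hH₀2⟩ := Set.not_subset.1 hnot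
    set S₁ := sepSet A B R₁.1 with hS₁def
    set S₂ := sepSet A B R₂.1 with hS₂def
    set DF := AF.filter (fun K => K ∈ S₁ ∧ K ∉ S₂) with hDFdef
    have hDFne : DF.Nonempty := ⟨H₀, Finset.mem_filter.2 ⟨(hAF H₀).2 hH₀1.1, hH₀1, hH₀2⟩⟩
    obtain ⟨Hm, hHmDF, hHmmin⟩ := DF.exists_min_image r hDFne
    rw [hDFdef, Finset.mem_filter] at hHmDF
    obtain ⟨hHmAF, hHmS₁, hHmS₂⟩ := hHmDF
    have hHmA : Hm ∈ A := (hAF Hm).1 hHmAF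
    set i := κ Hm with hidef
    have hcontra := hf i
    have keyQ : ∀ H', H' ∈ A → κ H' = i → H' ∈ S₂ → H' ∉ S₁ → r Hm < r H' := by
      intro H' hH'A hκ' hH'S₂ hH'S₁
      have hneH : Hm ≠ H' := fun h => hH'S₁ (h ▸ hHmS₁)
      obtain ⟨b, b', hbP, hb'P, hbne, hbbas, hb'bas, ⟨hb1, hb2⟩, ⟨hb'1, hb'2⟩, huniq, hstab⟩ :=
        geo hA hB R₁.2 R₂.2 hHmA hH'A hneH hHmS₁ hHmS₂ hH'S₂ hH'S₁
      have hbA : b ∈ A := hbP.1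
      have hb'A : b' ∈ A := hb'P.1
      have hHmP : Hm ∈ pencil A Hm H' := ⟨hHmA, Set.inter_subset_left⟩
      have hH'P : H' ∈ pencil A Hm H' := ⟨hH'A, Set.inter_subset_right⟩
      have hHmb : Hm = b := by
        by_contra hne2
        have hHmnotb' : Hm ≠ b' := fun h => hHmS₂ (h ▸ hb'1)
        have hHmnotbasic : ¬ IsBasicIn (pencil A Hm H') B Hm := fun hbas => by
          rcases huniq Hm hbas with h | h
          · exact hne2 h
          · exact hHmnotb' h
        have hbneHm : b ≠ Hm := fun h => hne2 h.symm
        have hQE : QEdge A B b Hm := by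
          refine ⟨hbA, hHmA, hbneHm, ?_, ?_⟩
          · rw [hstab b Hm hbP hHmP hbneHm]
            exact hbbas
          · rw [hstab b Hm hbP hHmP hbneHm]
            exact hHmnotbasic
        have hlt := hrQ b Hm hbA hHmA hQE
        have hge := hHmmin b (by
          rw [hDFdef, Finset.mem_filter]
          exact ⟨(hAF b).2 hbA, hb1, hb2⟩)
        omega
      have hH'notb' : H' ≠ b' := by
        intro h
        have hHmneb' : Hm ≠ b' := fun hh => hHmS₂ (hh ▸ hb'1)
        have hGE : GEdge A B Hm b' := by
          refine ⟨hHmA, hb'A, hHmneb', ?_, ?_⟩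
          · rw [hstab Hm b' hHmP hb'P hHmneb']
            have hb2' := hbbas
            rw [← hHmb] at hb2'
            exact hb2'
          · rw [hstab Hm b' hHmP hb'P hHmneb']
            exact hb'bas
        exact hκ Hm b' hGE (by rw [← h, hκ', hidef])
      have hH'notb : H' ≠ b := fun h => hH'S₁ (h ▸ hb1)
      have hH'notbasic : ¬ IsBasicIn (pencil A Hm H') B H' := fun hbas => by
        rcases huniq H' hbas with h | h
        · exact hH'notb h
        · exact hH'notb' h
      have hQE2 : QEdge A B Hm H' := by
        refine ⟨hHmA, hH'A, hneH, ?_, hH'notbasic⟩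
        have hb2' := hbbas
        rw [← hHmb] at hb2'
        exact hb2'
      exact hrQ Hm H' hHmA hH'A hQE2
    set F₁ := AF.filter (fun K => κ K = i ∧ K ∈ S₁) with hF₁def
    set F₂ := AF.filter (fun K => κ K = i ∧ K ∈ S₂) with hF₂def
    set T := F₂.filter (fun K => K ∈ S₁) with hTdef
    set T' := F₂.filter (fun K => K ∉ S₁) with hT'def
    have hsplit : ∑ K ∈ F₂, w K = ∑ K ∈ T, w K + ∑ K ∈ T', w K :=
      (Finset.sum_filter_add_sum_filter_not F₂ _ w).symm
    have hT'AF : ∀ K ∈ T', K ∈ AF := by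
      intro K hK
      rw [hT'def, Finset.mem_filter] at hK
      exact (Finset.mem_filter.1 hK.1).1
    have hT'lt : ∑ K ∈ T', w K < w Hm := by
      have hinj : ∀ K ∈ T', ∀ K' ∈ T', r K = r K' → K = K' := by
        intro K hK K' hK' h
        exact hrinj K (hT'AF K hK) K' (hT'AF K' hK') h
      have himg : ∑ j ∈ T'.image r, ((1:ℝ)/2)^j = ∑ K ∈ T', w K :=
        Finset.sum_image hinj
      rw [← himg, hwdef]
      apply sum_halfpow_lt
      intro j hj
      rw [Finset.mem_image] at hj
      obtain ⟨K, hKT', rfl⟩ := hj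
      have hK2 := hKT'
      rw [hT'def, Finset.mem_filter] at hK2
      obtain ⟨hKF₂, hKS₁⟩ := hK2
      rw [hF₂def, Finset.mem_filter] at hKF₂
      exact keyQ K ((hAF K).1 hKF₂.1) hKF₂.2.1 hKF₂.2.2 hKS₁
    have hHmT : Hm ∉ T := by
      intro h
      rw [hTdef, Finset.mem_filter, hF₂def, Finset.mem_filter] at h
      exact hHmS₂ h.1.2.2
    have hTsub : insert Hm T ⊆ F₁ := by
      intro K hK
      rcases Finset.mem_insert.1 hK with rfl | hK
      · rw [hF₁def, Finset.mem_filter]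
        exact ⟨hHmAF, rfl, hHmS₁⟩
      · rw [hTdef, Finset.mem_filter, hF₂def, Finset.mem_filter] at hK
        rw [hF₁def, Finset.mem_filter]
        exact ⟨hK.1.1, hK.1.2.1, hK.2⟩
    have hF₁ge : ∑ K ∈ T, w K + w Hm ≤ ∑ K ∈ F₁, w K := by
      have h6 := Finset.sum_le_sum_of_subset_of_nonneg hTsub (fun K _ _ => hw0 K)
      rw [Finset.sum_insert hHmT] at h6
      linarith
    linarith
end
end

section
/- Let 𝒜 be a central hyperplane arrangement in ℝⁿ with base region B. The order dimension of 𝒫(𝒜,B) is at least the number of facets of B, and the number of facets of B is at least the rank of 𝒜. -/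
open scoped RealInnerProductSpace

noncomputable section

variable {n : ℕ}

/-- The rank of the arrangement `A`: the dimension of the span of its normal vectors,
i.e. of the orthogonal complement of the intersection of the hyperplanes. -/
def arrRank (A : Set (Set (EuclideanSpace ℝ (Fin n)))) : ℕ :=
  Module.finrank ℝ ((Submodule.span ℝ (⋂₀ A))ᗮ)

/-- The hyperplanes of `A` containing a facet of the region `B`, i.e. meeting `B` in
codimension one.  These are in bijection with the facets of `B`. -/
def facetHyperplanes (A : Set (Set (EuclideanSpace ℝ (Fin n))))
    (B : Set (EuclideanSpace ℝ (Fin n))) : Set (Set (EuclideanSpace ℝ (Fin n))) :=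
  {H | H ∈ A ∧ Submodule.span ℝ (H ∩ B) = Submodule.span ℝ H}


namespace ArrAux

local notation "E" => EuclideanSpace ℝ (Fin n)

/-- kernel of the functional `⟪v,·⟫` as a submodule -/
def kerv (v : E) : Submodule ℝ E := LinearMap.ker ((innerSL ℝ v : E →L[ℝ] ℝ) : E →ₗ[ℝ] ℝ)

@[simp] lemma mem_kerv {v x : E} : x ∈ kerv v ↔ ⟪v, x⟫ = 0 := by
  simp [kerv]

lemma kerv_coe (v : E) : (kerv v : Set E) = {x | ⟪v, x⟫ = 0} := by
  ext x; simp [kerv]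

/-- two normals of nested hyperplanes are proportional -/
lemma normal_proportional {v w : E} (hv : v ≠ 0)
    (h : {x : E | ⟪v, x⟫ = 0} ⊆ {x : E | ⟪w, x⟫ = 0}) :
    ∃ c : ℝ, w = c • v := by
  set a : ℝ := ⟪v, w⟫ / (‖v‖ ^ 2) with ha
  refine ⟨a, ?_⟩
  set u : E := w - a • v with hu
  have hvu : ⟪v, u⟫ = 0 := by
    have hv2 : ‖v‖ ^ 2 ≠ 0 := by
      simpa using pow_ne_zero 2 (norm_ne_zero_iff.2 hv)
    simp only [hu, inner_sub_right, real_inner_smul_right]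
    rw [ha, real_inner_self_eq_norm_sq]
    field_simp
    ring
  have hwu : ⟪w, u⟫ = 0 := h hvu
  have hu0 : u = 0 := by
    have h1 : ⟪u, u⟫ = 0 := by
      have h2 : ⟪w, u⟫ - a * ⟪v, u⟫ = 0 := by rw [hvu, hwu]; ring
      calc ⟪u, u⟫ = ⟪w, u⟫ - a * ⟪v, u⟫ := by
            rw [hu, inner_sub_left, real_inner_smul_left]
        _ = 0 := h2
    exact inner_self_eq_zero.1 h1
  have : w - a • v = 0 := hu0
  exact (sub_eq_zero.1 this)

/-- normals of equal hyperplane-sets give equality -/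
lemma hyperplane_eq_of_subset {v w : E} (hv : v ≠ 0) (hw : w ≠ 0)
    (h : {x : E | ⟪v, x⟫ = 0} ⊆ {x : E | ⟪w, x⟫ = 0}) :
    {x : E | ⟪v, x⟫ = 0} = {x : E | ⟪w, x⟫ = 0} := by
  obtain ⟨c, rfl⟩ := normal_proportional hv h
  have hc : c ≠ 0 := by rintro rfl; simp at hw
  ext x
  simp only [Set.mem_setOf_eq, real_inner_smul_left]
  constructor
  · intro hx; rw [hx]; ring
  · intro hx; exact (mul_eq_zero.1 hx).resolve_left hc

/-- a convex set covered by finitely many subspaces lies in one of them -/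
lemma convex_subset_of_cover {ι : Type} (s : Finset ι) (p : ι → Submodule ℝ E)
    (C : Set E) (hC : Convex ℝ C) (hne : C.Nonempty)
    (hcov : C ⊆ ⋃ i ∈ s, (p i : Set E)) : ∃ i ∈ s, C ⊆ (p i : Set E) := by
  classical
  induction s using Finset.induction_on with
  | empty => simp only [Finset.notMem_empty, Set.iUnion_of_empty, Set.iUnion_empty] at hcov
             exact absurd (hcov hne.choose_spec) (Set.notMem_empty _)
  | @insert a s ha IH =>
    by_cases hsub : C ⊆ ⋃ i ∈ s, (p i : Set E)
    · obtain ⟨i, hi, hCi⟩ := IH hsub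
      exact ⟨i, Finset.mem_insert_of_mem hi, hCi⟩
    · obtain ⟨x, hxC, hxs⟩ := Set.not_subset.1 hsub
      have hxa : x ∈ p a := by
        have := hcov hxC
        simp only [Finset.mem_insert, Set.mem_iUnion, exists_prop] at this hxs
        obtain ⟨i, hi | hi, hxi⟩ := this
        · rwa [hi] at hxi
        · exact absurd ⟨i, hi, hxi⟩ hxs
      refine ⟨a, Finset.mem_insert_self a s, fun y hyC => ?_⟩
      by_contra hya
      -- points on the open segment
      have hz : ∀ t ∈ Set.Ioo (0:ℝ) 1, x + t • (y - x) ∈ C := by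
        intro t ht
        have : (1 - t) • x + t • y ∈ C := hC hxC hyC (by linarith [ht.2]) (le_of_lt ht.1) (by ring)
        convert this using 1
        module
      have hinf : Infinite (Set.Ioo (0:ℝ) 1) := Set.Ioo.infinite (by norm_num)
      have hfin : Finite ((insert a s : Finset ι) : Set ι) := Set.Finite.to_subtype (Finset.finite_toSet _)
      -- assign to each t a covering index
      have hF : ∀ t : Set.Ioo (0:ℝ) 1, ∃ i : ((insert a s : Finset ι) : Set ι),
          x + (t:ℝ) • (y - x) ∈ p i.1 := by
        intro t
        have := hcov (hz t t.2)
        simp only [Set.mem_iUnion, exists_prop] at this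
        obtain ⟨i, hi, hti⟩ := this
        exact ⟨⟨i, by simpa using hi⟩, hti⟩
      choose F hFmem using hF
      obtain ⟨t, t', htt', hFt⟩ := Finite.exists_ne_map_eq_of_infinite F
      set i := F t with hi
      have h1 : x + (t:ℝ) • (y - x) ∈ p i.1 := hFmem t
      have h2 : x + (t':ℝ) • (y - x) ∈ p i.1 := by rw [show i = F t' from hFt]; exact hFmem t'
      have htne : (t:ℝ) ≠ (t':ℝ) := fun h => htt' (Subtype.ext h)
      have hdiff : ((t:ℝ) - (t':ℝ)) • (y - x) ∈ p i.1 := by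
        have := Submodule.sub_mem _ h1 h2
        convert this using 1
        module
      have hyx : y - x ∈ p i.1 := by
        have := Submodule.smul_mem _ ((t:ℝ) - (t':ℝ))⁻¹ hdiff
        rwa [smul_smul, inv_mul_cancel₀ (sub_ne_zero.2 htne), one_smul] at this
      have hxmem : x ∈ p i.1 := by
        have := Submodule.sub_mem _ h1 (Submodule.smul_mem _ (t:ℝ) hyx)
        convert this using 1
        module
      have hymem : y ∈ p i.1 := by
        have := Submodule.add_mem _ hxmem hyx
        convert this using 1
        module
      have hicases : i.1 = a ∨ i.1 ∈ s := by
        have := i.2; simpa [Finset.mem_insert] using this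
      rcases hicases with h | h
      · exact hya (h ▸ hymem)
      · exact hxs (by simp only [Set.mem_iUnion, exists_prop]; exact ⟨i.1, h, hxmem⟩)

/-- a nonempty open set is not contained in a hyperplane -/
lemma open_not_subset_kerv {U : Set E} (hU : IsOpen U) {x : E} (hx : x ∈ U)
    {w : E} (hw : w ≠ 0) (h : U ⊆ (kerv w : Set E)) : False := by
  obtain ⟨ε, hε, hball⟩ := Metric.isOpen_iff.1 hU x hx
  have hnw : 0 < ‖w‖ := norm_pos_iff.2 hw
  set y := x + (ε / (2 * ‖w‖)) • w with hy
  have hyU : y ∈ U := by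
    apply hball
    rw [hy, Metric.mem_ball, dist_eq_norm]
    have : x + (ε / (2 * ‖w‖)) • w - x = (ε / (2 * ‖w‖)) • w := by abel
    rw [this, norm_smul, Real.norm_eq_abs, abs_of_pos (by positivity)]
    have hne : (2:ℝ) * ‖w‖ ≠ 0 := by positivity
    calc ε / (2 * ‖w‖) * ‖w‖ = ε / 2 := by field_simp
      _ < ε := by linarith
  have h1 : ⟪w, x⟫ = 0 := by have := h hx; rwa [SetLike.mem_coe, mem_kerv] at this
  have h2 : ⟪w, y⟫ = 0 := by have := h hyU; rwa [SetLike.mem_coe, mem_kerv] at this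
  rw [hy, inner_add_right, real_inner_smul_right, h1, real_inner_self_eq_norm_sq] at h2
  have : ε / (2 * ‖w‖) * ‖w‖ ^ 2 > 0 := by positivity
  linarith

variable {A : Set (Set (EuclideanSpace ℝ (Fin n)))} {x₀ : EuclideanSpace ℝ (Fin n)}

/-- normals data: nonzero, defines the hyperplane, positive at the base point -/
def GoodV (A : Set (Set E)) (x₀ : E) (v : Set E → E) : Prop :=
  ∀ H ∈ A, v H ≠ 0 ∧ H = {x : E | ⟪v H, x⟫ = 0} ∧ 0 < ⟪v H, x₀⟫

lemma mem_arrComplement {x : E} : x ∈ arrComplement A ↔ ∀ H ∈ A, x ∉ H := by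
  simp only [arrComplement, Set.mem_compl_iff, Set.mem_iUnion, exists_prop, not_exists, not_and]

/-- the open polyhedron with the same sign pattern as `x` -/
def Ppt (A : Set (Set E)) (v : Set E → E) (x : E) : Set E :=
  {y | ∀ H ∈ A, 0 < ⟪v H, x⟫ * ⟪v H, y⟫}

/-- its closure -/
def Qpt (A : Set (Set E)) (v : Set E → E) (x : E) : Set E :=
  {y | ∀ H ∈ A, 0 ≤ ⟪v H, x⟫ * ⟪v H, y⟫}

variable {v : Set (EuclideanSpace ℝ (Fin n)) → EuclideanSpace ℝ (Fin n)}

lemma mem_arrComplement_iff_inner (hv : GoodV A x₀ v) {x : E} :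
    x ∈ arrComplement A ↔ ∀ H ∈ A, ⟪v H, x⟫ ≠ 0 := by
  rw [mem_arrComplement]
  constructor
  · intro h H hH
    have := h H hH
    rw [(hv H hH).2.1] at this
    simpa using this
  · intro h H hH hx
    rw [(hv H hH).2.1] at hx
    exact h H hH hx

lemma isOpen_Ppt (hfin : A.Finite) (v : Set E → E) (x : E) : IsOpen (Ppt A v x) := by
  have he : Ppt A v x = ⋂ H ∈ A, {y : E | 0 < ⟪v H, x⟫ * ⟪v H, y⟫} := by
    ext y; simp [Ppt]
  rw [he]
  refine hfin.isOpen_biInter (fun H _ => ?_)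
  exact isOpen_lt continuous_const (continuous_const.mul (continuous_const.inner continuous_id))

lemma convex_Ppt (v : Set E → E) (x : E) : Convex ℝ (Ppt A v x) := by
  intro y₁ h₁ y₂ h₂ a b ha hb hab
  intro H hH
  have e : ⟪v H, x⟫ * ⟪v H, a • y₁ + b • y₂⟫
      = a * (⟪v H, x⟫ * ⟪v H, y₁⟫) + b * (⟪v H, x⟫ * ⟪v H, y₂⟫) := by
    rw [inner_add_right, real_inner_smul_right, real_inner_smul_right]; ring
  rw [e]
  have p₁ := h₁ H hH
  have p₂ := h₂ H hH
  rcases eq_or_lt_of_le ha with rfl | ha'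
  · have hb1 : b = 1 := by linarith
    rw [hb1]; simpa using p₂
  · nlinarith

lemma convex_Qpt (v : Set E → E) (x : E) : Convex ℝ (Qpt A v x) := by
  intro y₁ h₁ y₂ h₂ a b ha hb hab
  intro H hH
  have e : ⟪v H, x⟫ * ⟪v H, a • y₁ + b • y₂⟫
      = a * (⟪v H, x⟫ * ⟪v H, y₁⟫) + b * (⟪v H, x⟫ * ⟪v H, y₂⟫) := by
    rw [inner_add_right, real_inner_smul_right, real_inner_smul_right]; ring
  rw [e]
  have p₁ := h₁ H hH
  have p₂ := h₂ H hH
  positivity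

lemma mem_Ppt_self (hv : GoodV A x₀ v) {x : E} (hx : x ∈ arrComplement A) : x ∈ Ppt A v x := by
  intro H hH
  exact mul_self_pos.2 ((mem_arrComplement_iff_inner hv).1 hx H hH)

lemma Ppt_subset_arrComplement (hv : GoodV A x₀ v) (x : E) :
    Ppt A v x ⊆ arrComplement A := by
  intro y hy
  rw [mem_arrComplement_iff_inner hv]
  intro H hH h0
  have := hy H hH
  rw [h0, mul_zero] at this
  exact lt_irrefl 0 this

lemma connectedComponentIn_eq_Ppt (hv : GoodV A x₀ v) {x : E} (hx : x ∈ arrComplement A) :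
    connectedComponentIn (arrComplement A) x = Ppt A v x := by
  apply Set.Subset.antisymm
  · intro y hy
    intro H hH
    set g : EuclideanSpace ℝ (Fin n) → ℝ := fun z => ⟪v H, x⟫ * ⟪v H, z⟫ with hg
    have hgc : Continuous g := continuous_const.mul (continuous_const.inner continuous_id)
    have hcover : connectedComponentIn (arrComplement A) x ⊆ {z | 0 < g z} ∪ {z | g z < 0} := by
      intro z hz
      have hz' : z ∈ arrComplement A := connectedComponentIn_subset _ _ hz
      have h1 : ⟪v H, z⟫ ≠ 0 := (mem_arrComplement_iff_inner hv).1 hz' H hH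
      have h2 : ⟪v H, x⟫ ≠ 0 := (mem_arrComplement_iff_inner hv).1 hx H hH
      rcases (mul_ne_zero h2 h1).lt_or_gt with h | h
      · exact Or.inr h
      · exact Or.inl h
    have hsub : connectedComponentIn (arrComplement A) x ⊆ {z | 0 < g z} :=
      IsPreconnected.subset_left_of_subset_union
        (isOpen_lt continuous_const hgc) (isOpen_lt hgc continuous_const)
        (by
          rw [Set.disjoint_left]
          intro z h1 h2
          simp only [Set.mem_setOf_eq] at h1 h2
          linarith)
        hcover
        ⟨x, mem_connectedComponentIn hx,
          mul_self_pos.2 ((mem_arrComplement_iff_inner hv).1 hx H hH)⟩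
        isPreconnected_connectedComponentIn
    exact hsub hy
  · exact IsPreconnected.subset_connectedComponentIn
      ((convex_Ppt v x).isPreconnected)
      (mem_Ppt_self hv hx) (Ppt_subset_arrComplement hv x)

lemma closure_Ppt (hfin : A.Finite) (hv : GoodV A x₀ v) {x : E} (hx : x ∈ arrComplement A) :
    closure (Ppt A v x) = Qpt A v x := by
  apply Set.Subset.antisymm
  · apply closure_minimal
    · intro y hy H hH
      exact le_of_lt (hy H hH)
    · have he : Qpt A v x = ⋂ H ∈ A, {y : E | 0 ≤ ⟪v H, x⟫ * ⟪v H, y⟫} := by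
        ext y; simp [Qpt]
      rw [he]
      refine isClosed_biInter (fun H _ => ?_)
      exact isClosed_le continuous_const
        (continuous_const.mul (continuous_const.inner continuous_id))
  · intro y hy
    have hseq : ∀ t : ℝ, 0 < t → t ≤ 1 → (1 - t) • y + t • x ∈ Ppt A v x := by
      intro t ht0 ht1 H hH
      have h1 : 0 ≤ ⟪v H, x⟫ * ⟪v H, y⟫ := hy H hH
      have h2 : 0 < ⟪v H, x⟫ * ⟪v H, x⟫ :=
        mul_self_pos.2 ((mem_arrComplement_iff_inner hv).1 hx H hH)
      have e : ⟪v H, x⟫ * ⟪v H, (1 - t) • y + t • x⟫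
          = (1 - t) * (⟪v H, x⟫ * ⟪v H, y⟫) + t * (⟪v H, x⟫ * ⟪v H, x⟫) := by
        rw [inner_add_right, real_inner_smul_right, real_inner_smul_right]; ring
      rw [e]
      nlinarith
    rw [Metric.mem_closure_iff]
    intro ε hε
    set t : ℝ := min 1 (ε / (‖y - x‖ + 1)) with ht
    have htpos : 0 < t := lt_min one_pos (div_pos hε (by positivity))
    have ht1 : t ≤ 1 := min_le_left _ _
    refine ⟨(1 - t) • y + t • x, hseq t htpos ht1, ?_⟩
    have hd : y - ((1 - t) • y + t • x) = t • (y - x) := by module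
    rw [dist_eq_norm, hd, norm_smul, Real.norm_eq_abs, abs_of_pos htpos]
    have hle : t ≤ ε / (‖y - x‖ + 1) := min_le_right _ _
    have hxy : 0 ≤ ‖y - x‖ := norm_nonneg _
    calc t * ‖y - x‖ ≤ (ε / (‖y - x‖ + 1)) * ‖y - x‖ := by
          exact mul_le_mul_of_nonneg_right hle hxy
      _ < ε := by
          rw [div_mul_eq_mul_div, div_lt_iff₀ (by positivity)]
          nlinarith

lemma interior_closure_Ppt (hfin : A.Finite) (hv : GoodV A x₀ v) {x : E}
    (hx : x ∈ arrComplement A) :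
    interior (closure (Ppt A v x)) = Ppt A v x := by
  apply Set.Subset.antisymm
  · rw [closure_Ppt hfin hv hx]
    intro y hy
    obtain ⟨ε, hε, hball⟩ := Metric.isOpen_iff.1 isOpen_interior y hy
    intro H hH
    have hQ : ∀ z ∈ Metric.ball y ε, 0 ≤ ⟪v H, x⟫ * ⟪v H, z⟫ := fun z hz =>
      (interior_subset (hball hz)) H hH
    by_contra hcon
    push_neg at hcon
    set c : ℝ := ⟪v H, x⟫ with hc
    set w : E := v H with hw
    have hwne : w ≠ 0 := (hv H hH).1
    have hcne : c ≠ 0 := (mem_arrComplement_iff_inner hv).1 hx H hH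
    have hnw : 0 < ‖w‖ := norm_pos_iff.2 hwne
    set δ : ℝ := ε / (2 * (|c| * ‖w‖ + 1)) with hδ
    have hδpos : 0 < δ := by positivity
    set z : E := y - (δ * c) • w with hz
    have hzball : z ∈ Metric.ball y ε := by
      rw [Metric.mem_ball, dist_eq_norm]
      have hzy : z - y = -((δ * c) • w) := by rw [hz]; abel
      rw [hzy, norm_neg, norm_smul, Real.norm_eq_abs, abs_mul, abs_of_pos hδpos]
      have h2 : δ * (|c| * ‖w‖ + 1) = ε / 2 := by
        rw [hδ]; field_simp
      nlinarith [abs_nonneg c, mul_nonneg (abs_nonneg c) (le_of_lt hnw)]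
    have hq := hQ z hzball
    rw [hz, inner_sub_right, real_inner_smul_right, real_inner_self_eq_norm_sq] at hq
    have hexp : c * (⟪w, y⟫ - δ * c * ‖w‖ ^ 2) = c * ⟪w, y⟫ - δ * c ^ 2 * ‖w‖ ^ 2 := by ring
    rw [hexp] at hq
    have hpos : 0 < δ * c ^ 2 * ‖w‖ ^ 2 := by positivity
    linarith
  · exact (isOpen_Ppt hfin v x).subset_interior_iff.2 subset_closure

lemma exists_goodV (hA : IsCentralArrangement A) (hx₀ : x₀ ∈ arrComplement A) :
    ∃ v : Set (EuclideanSpace ℝ (Fin n)) → EuclideanSpace ℝ (Fin n), GoodV A x₀ v := by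
  classical
  have h : ∀ H : Set (EuclideanSpace ℝ (Fin n)), ∃ w : EuclideanSpace ℝ (Fin n),
      H ∈ A → (w ≠ 0 ∧ H = {x : EuclideanSpace ℝ (Fin n) | ⟪w, x⟫ = 0} ∧ 0 < ⟪w, x₀⟫) := by
    intro H
    by_cases hH : H ∈ A
    · obtain ⟨u, hu0, huH⟩ := hA.2.2 H hH
      have hux : ⟪u, x₀⟫ ≠ 0 := by
        intro h0
        exact (mem_arrComplement.1 hx₀ H hH) (by rw [huH]; exact h0)
      rcases hux.lt_or_gt with hneg | hpos
      · refine ⟨-u, fun _ => ⟨neg_ne_zero.2 hu0, ?_, ?_⟩⟩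
        · rw [huH]; ext y; simp only [Set.mem_setOf_eq, inner_neg_left, neg_eq_zero]
        · rw [inner_neg_left]; linarith
      · exact ⟨u, fun _ => ⟨hu0, huH, hpos⟩⟩
    · exact ⟨0, fun h => absurd h hH⟩
  choose v hvp using h
  exact ⟨v, fun H hH => hvp H hH⟩

lemma isRegion_iff (hv : GoodV A x₀ v) {R : Set (EuclideanSpace ℝ (Fin n))} :
    IsRegion A R ↔ ∃ x ∈ arrComplement A, R = closure (Ppt A v x) := by
  constructor
  · rintro ⟨x, hx, rfl⟩
    exact ⟨x, hx, by rw [connectedComponentIn_eq_Ppt hv hx]⟩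
  · rintro ⟨x, hx, rfl⟩
    exact ⟨x, hx, by rw [connectedComponentIn_eq_Ppt hv hx]⟩

lemma sepSet_eq (hfin : A.Finite) (hv : GoodV A x₀ v) (hx₀ : x₀ ∈ arrComplement A)
    {x : EuclideanSpace ℝ (Fin n)} (hx : x ∈ arrComplement A) :
    sepSet A (closure (Ppt A v x₀)) (closure (Ppt A v x))
      = {H | H ∈ A ∧ ⟪v H, x⟫ < 0} := by
  ext H
  simp only [sepSet, Set.mem_setOf_eq]
  constructor
  · rintro ⟨hH, w, hw0, hwH, hpos, hneg⟩
    refine ⟨hH, ?_⟩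
    have hker : {y : EuclideanSpace ℝ (Fin n) | ⟪v H, y⟫ = 0} ⊆ {y | ⟪w, y⟫ = 0} := by
      rw [← (hv H hH).2.1, hwH]
    obtain ⟨c, rfl⟩ := normal_proportional (hv H hH).1 hker
    have hc0 : c ≠ 0 := by rintro rfl; simp at hw0
    have h₀ : ⟪c • v H, x₀⟫ < 0 := by
      apply hneg
      rw [interior_closure_Ppt hfin hv hx₀]
      exact mem_Ppt_self hv hx₀
    have hx₀pos : 0 < ⟪v H, x₀⟫ := (hv H hH).2.2
    rw [real_inner_smul_left] at h₀
    have hcneg : c < 0 := by nlinarith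
    have hx' : 0 < ⟪c • v H, x⟫ := by
      apply hpos
      rw [interior_closure_Ppt hfin hv hx]
      exact mem_Ppt_self hv hx
    rw [real_inner_smul_left] at hx'
    nlinarith
  · rintro ⟨hH, hxneg⟩
    refine ⟨hH, -(v H), neg_ne_zero.2 (hv H hH).1, ?_, ?_, ?_⟩
    · refine ((hv H hH).2.1).trans ?_
      ext y
      simp only [Set.mem_setOf_eq, inner_neg_left, neg_eq_zero]
    · intro y hy
      rw [interior_closure_Ppt hfin hv hx] at hy
      have := hy H hH
      rw [inner_neg_left]
      nlinarith
    · intro y hy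
      rw [interior_closure_Ppt hfin hv hx₀] at hy
      have := hy H hH
      have hx₀pos : 0 < ⟪v H, x₀⟫ := (hv H hH).2.2
      rw [inner_neg_left]
      nlinarith

lemma convex_inter_hyperplane_Qpt (hv : GoodV A x₀ v) {H : Set (EuclideanSpace ℝ (Fin n))}
    (hH : H ∈ A) : Convex ℝ (H ∩ Qpt A v x₀) := by
  apply Convex.inter ?_ (convex_Qpt v x₀)
  rw [(hv H hH).2.1, ← kerv_coe]
  exact (kerv (v H)).convex

lemma mem_facet_iff (hfin : A.Finite) (hv : GoodV A x₀ v) (hx₀ : x₀ ∈ arrComplement A)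
    {H : Set (EuclideanSpace ℝ (Fin n))} :
    H ∈ facetHyperplanes A (closure (Ppt A v x₀)) ↔
      H ∈ A ∧ ∃ z ∈ H ∩ Qpt A v x₀, ∀ H' ∈ A, H' ≠ H → z ∉ H' := by
  classical
  rw [show closure (Ppt A v x₀) = Qpt A v x₀ from closure_Ppt hfin hv hx₀]
  simp only [facetHyperplanes, Set.mem_setOf_eq]
  constructor
  · rintro ⟨hH, hspan⟩
    refine ⟨hH, ?_⟩
    by_contra hcon
    push_neg at hcon
    -- the facet is covered by the other hyperplanes
    set s : Finset (Set (EuclideanSpace ℝ (Fin n))) := (hfin.subset (Set.diff_subset (t := {H}))).toFinset with hs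
    have hcov : H ∩ Qpt A v x₀ ⊆ ⋃ H' ∈ s, ((kerv (v H') : Submodule ℝ (EuclideanSpace ℝ (Fin n))) : Set (EuclideanSpace ℝ (Fin n))) := by
      intro z hz
      obtain ⟨H', hH', hne, hzH'⟩ := hcon z hz
      simp only [Set.mem_iUnion, exists_prop]
      refine ⟨H', by simp [hs, Set.mem_diff, hH', hne], ?_⟩
      rw [SetLike.mem_coe, mem_kerv]
      have := hzH'
      rw [(hv H' hH').2.1] at this
      exact this
    have hne0 : (H ∩ Qpt A v x₀).Nonempty := by
      refine ⟨0, ?_, ?_⟩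
      · rw [(hv H hH).2.1]; simp
      · intro H' hH'; simp
    obtain ⟨H', hH's, hsub⟩ := convex_subset_of_cover s (fun H' => kerv (v H'))
      _ (convex_inter_hyperplane_Qpt hv hH) hne0 hcov
    have hH'A : H' ∈ A ∧ H' ≠ H := by
      have := hH's; simp only [hs, Set.Finite.mem_toFinset, Set.mem_diff, Set.mem_singleton_iff] at this
      exact ⟨this.1, this.2⟩
    -- span H ≤ kerv (v H')
    have h1 : Submodule.span ℝ H ≤ kerv (v H') := by
      rw [← hspan]
      rw [Submodule.span_le]
      intro z hz
      exact hsub hz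
    have h2 : {y : EuclideanSpace ℝ (Fin n) | ⟪v H, y⟫ = 0} ⊆ {y | ⟪v H', y⟫ = 0} := by
      intro y hy
      have hyH : y ∈ H := by rw [(hv H hH).2.1]; exact hy
      have := h1 (Submodule.subset_span hyH)
      rwa [mem_kerv] at this
    have h3 := hyperplane_eq_of_subset (hv H hH).1 (hv H' hH'A.1).1 h2
    exact hH'A.2 (((hv H' hH'A.1).2.1).trans (((hv H hH).2.1).symm ▸ h3.symm) |>.trans (((hv H hH).2.1).symm))
  · rintro ⟨hH, z, hz, hzgen⟩
    refine ⟨hH, ?_⟩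
    apply le_antisymm
    · exact Submodule.span_mono Set.inter_subset_left
    · rw [Submodule.span_le]
      intro h hh
      -- find δ with z + δ • h ∈ H ∩ Qpt
      have hU : ∃ δ : ℝ, 0 < δ ∧ z + δ • h ∈ H ∩ Qpt A v x₀ := by
        set U : Set (EuclideanSpace ℝ (Fin n)) :=
          ⋂ H' ∈ A \ {H}, {y : EuclideanSpace ℝ (Fin n) | 0 < ⟪v H', y⟫} with hUdef
        have hUopen : IsOpen U :=
          (hfin.subset Set.diff_subset).isOpen_biInter (fun H' _ =>
            isOpen_lt continuous_const (continuous_const.inner continuous_id))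
        have hzU : z ∈ U := by
          rw [hUdef]
          simp only [Set.mem_iInter, Set.mem_setOf_eq, Set.mem_diff, Set.mem_singleton_iff, and_imp]
          intro H' hH' hne
          have hq := hz.2 H' hH'
          have hx₀pos : 0 < ⟪v H', x₀⟫ := (hv H' hH').2.2
          have hzne : ⟪v H', z⟫ ≠ 0 := by
            intro h0
            exact hzgen H' hH' hne (by rw [(hv H' hH').2.1]; exact h0)
          rcases hzne.lt_or_gt with hlt | hgt
          · nlinarith
          · exact hgt
        obtain ⟨ε, hε, hball⟩ := Metric.isOpen_iff.1 hUopen z hzU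
        set δ : ℝ := ε / (2 * (‖h‖ + 1)) with hδ
        have hδpos : 0 < δ := by positivity
        refine ⟨δ, hδpos, ?_, ?_⟩
        · -- z + δ h ∈ H
          rw [(hv H hH).2.1]
          have hzH : ⟪v H, z⟫ = 0 := by
            have := hz.1; rw [(hv H hH).2.1] at this; exact this
          have hhH : ⟪v H, h⟫ = 0 := by
            have := hh; rw [(hv H hH).2.1] at this; exact this
          simp only [Set.mem_setOf_eq, inner_add_right, real_inner_smul_right, hzH, hhH]
          ring
        · -- z + δ h ∈ Qpt
          have hmem : z + δ • h ∈ U := by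
            apply hball
            rw [Metric.mem_ball, dist_eq_norm]
            have : z + δ • h - z = δ • h := by abel
            rw [this, norm_smul, Real.norm_eq_abs, abs_of_pos hδpos]
            have h1 : δ * ‖h‖ < δ * (‖h‖ + 1) := by nlinarith
            have h2 : δ * (‖h‖ + 1) = ε / 2 := by rw [hδ]; field_simp
            linarith
          intro H' hH'
          by_cases hne : H' = H
          · subst hne
            have hzH : ⟪v H', z⟫ = 0 := by
              have := hz.1; rw [(hv H' hH').2.1] at this; exact this
            have hhH : ⟪v H', h⟫ = 0 := by
              have := hh; rw [(hv H' hH').2.1] at this; exact this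
            simp only [inner_add_right, real_inner_smul_right, hzH, hhH]
            simp
          · have : 0 < ⟪v H', z + δ • h⟫ := by
              have := hmem
              rw [hUdef] at this
              simp only [Set.mem_iInter, Set.mem_setOf_eq, Set.mem_diff, Set.mem_singleton_iff, and_imp] at this
              exact this H' hH' hne
            have hx₀pos : 0 < ⟪v H', x₀⟫ := (hv H' hH').2.2
            positivity
      obtain ⟨δ, hδpos, hmem⟩ := hU
      have hz' : z ∈ H ∩ Qpt A v x₀ := hz
      have hmem1 : (z + δ • h) - z ∈ Submodule.span ℝ (H ∩ Qpt A v x₀) :=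
        Submodule.sub_mem _ (Submodule.subset_span hmem) (Submodule.subset_span hz')
      have : (z + δ • h) - z = δ • h := by abel
      rw [this] at hmem1
      have := Submodule.smul_mem _ δ⁻¹ hmem1
      rwa [smul_smul, inv_mul_cancel₀ (ne_of_gt hδpos), one_smul] at this

lemma mem_Qpt_base_iff (hv : GoodV A x₀ v) {y : EuclideanSpace ℝ (Fin n)} :
    y ∈ Qpt A v x₀ ↔ ∀ H ∈ A, 0 ≤ ⟪v H, y⟫ := by
  constructor
  · intro h H hH
    have := h H hH
    have hx₀pos : 0 < ⟪v H, x₀⟫ := (hv H hH).2.2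
    nlinarith
  · intro h H hH
    have hx₀pos : 0 < ⟪v H, x₀⟫ := (hv H hH).2.2
    have := h H hH
    positivity

lemma mem_Ppt_base_iff (hv : GoodV A x₀ v) {y : EuclideanSpace ℝ (Fin n)} :
    y ∈ Ppt A v x₀ ↔ ∀ H ∈ A, 0 < ⟪v H, y⟫ := by
  constructor
  · intro h H hH
    have := h H hH
    have hx₀pos : 0 < ⟪v H, x₀⟫ := (hv H hH).2.2
    nlinarith
  · intro h H hH
    have hx₀pos : 0 < ⟪v H, x₀⟫ := (hv H hH).2.2
    have := h H hH
    positivity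

lemma eq_of_normal_smul (hv : GoodV A x₀ v) {H H' : Set (EuclideanSpace ℝ (Fin n))}
    (hH : H ∈ A) (hH' : H' ∈ A) {c : ℝ} (hc : c ≠ 0) (heq : v H' = c • v H) : H' = H := by
  rw [(hv H' hH').2.1, (hv H hH).2.1]
  ext y
  simp only [Set.mem_setOf_eq, heq, real_inner_smul_left]
  constructor
  · intro h; rcases mul_eq_zero.1 h with h | h
    · exact absurd h hc
    · exact h
  · intro h; rw [h]; ring

lemma exists_generic {ι : Type} (hfin : A.Finite) (hv : GoodV A x₀ v)
    (hx₀ : x₀ ∈ arrComplement A) (s : Finset ι) (w : ι → EuclideanSpace ℝ (Fin n))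
    (hw : ∀ i ∈ s, w i ≠ 0) :
    ∃ b ∈ Ppt A v x₀, ∀ i ∈ s, ⟪w i, b⟫ ≠ 0 := by
  by_contra hcon
  push_neg at hcon
  have hcov : Ppt A v x₀ ⊆ ⋃ i ∈ s, ((kerv (w i) : Submodule ℝ (EuclideanSpace ℝ (Fin n))) : Set (EuclideanSpace ℝ (Fin n))) := by
    intro b hb
    obtain ⟨i, hi, h0⟩ := hcon b hb
    simp only [Set.mem_iUnion, exists_prop]
    exact ⟨i, hi, by rw [SetLike.mem_coe, mem_kerv]; exact h0⟩
  obtain ⟨i, hi, hsub⟩ := convex_subset_of_cover s (fun i => kerv (w i)) _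
    (convex_Ppt v x₀) ⟨x₀, mem_Ppt_self hv hx₀⟩ hcov
  exact open_not_subset_kerv (isOpen_Ppt hfin v x₀) (mem_Ppt_self hv hx₀) (hw i hi) hsub

lemma Qf_subset_base (hfin : A.Finite) (hv : GoodV A x₀ v) (hx₀ : x₀ ∈ arrComplement A)
    {y : EuclideanSpace ℝ (Fin n)}
    (hy : ∀ H ∈ facetHyperplanes A (closure (Ppt A v x₀)), 0 ≤ ⟪v H, y⟫) :
    y ∈ Qpt A v x₀ := by
  classical
  rw [mem_Qpt_base_iff hv]
  by_contra hcon
  push_neg at hcon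
  -- the set of violated hyperplanes
  set N : Set (Set (EuclideanSpace ℝ (Fin n))) := {H | H ∈ A ∧ ⟪v H, y⟫ < 0} with hN
  have hNfin : N.Finite := hfin.subset (fun H hH => hH.1)
  have hNne : N.Nonempty := by
    obtain ⟨H, hH, hHy⟩ := hcon
    exact ⟨H, hH, hHy⟩
  set NA : Finset (Set (EuclideanSpace ℝ (Fin n))) := hNfin.toFinset with hNA
  set s : Finset (Set (EuclideanSpace ℝ (Fin n)) × Set (EuclideanSpace ℝ (Fin n))) :=
    (NA ×ˢ NA).filter (fun p => p.1 ≠ p.2) with hs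
  set w : Set (EuclideanSpace ℝ (Fin n)) × Set (EuclideanSpace ℝ (Fin n)) → EuclideanSpace ℝ (Fin n) :=
    fun p => ⟪v p.1, y⟫ • v p.2 - ⟪v p.2, y⟫ • v p.1 with hwdef
  have hw : ∀ p ∈ s, w p ≠ 0 := by
    intro p hp
    simp only [hs, Finset.mem_filter, Finset.mem_product, hNA, Set.Finite.mem_toFinset] at hp
    obtain ⟨⟨h1, h2⟩, hne⟩ := hp
    intro h0
    have heq : ⟪v p.1, y⟫ • v p.2 = ⟪v p.2, y⟫ • v p.1 := by
      have := sub_eq_zero.1 h0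
      exact this
    have h1y : ⟪v p.1, y⟫ ≠ 0 := ne_of_lt h1.2
    have h2y : ⟪v p.2, y⟫ ≠ 0 := ne_of_lt h2.2
    have hv2 : v p.2 = (⟪v p.1, y⟫⁻¹ * ⟪v p.2, y⟫) • v p.1 := by
      rw [← smul_smul, ← heq, smul_smul, inv_mul_cancel₀ h1y, one_smul]
    have := eq_of_normal_smul hv h1.1 h2.1 (mul_ne_zero (inv_ne_zero h1y) h2y) hv2
    exact hne this.symm
  obtain ⟨b, hb, hbgen⟩ := exists_generic hfin hv hx₀ s w hw
  have hbpos : ∀ H ∈ A, 0 < ⟪v H, b⟫ := (mem_Ppt_base_iff hv).1 hb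
  -- crossing times
  set tt : Set (EuclideanSpace ℝ (Fin n)) → ℝ :=
    fun H => ⟪v H, b⟫ / (⟪v H, b⟫ - ⟪v H, y⟫) with htt
  have hNAne : NA.Nonempty := by
    obtain ⟨H, hH⟩ := hNne
    exact ⟨H, by rw [hNA, Set.Finite.mem_toFinset]; exact hH⟩
  obtain ⟨Hs, hHsNA, hHsmin⟩ := NA.exists_min_image tt hNAne
  have hHsN : Hs ∈ N := by rwa [hNA, Set.Finite.mem_toFinset] at hHsNA
  have hdenpos : ∀ H ∈ N, 0 < ⟪v H, b⟫ - ⟪v H, y⟫ := by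
    intro H hH
    have := hbpos H hH.1
    have := hH.2
    linarith
  have httpos : ∀ H ∈ N, 0 < tt H := by
    intro H hH
    exact div_pos (hbpos H hH.1) (hdenpos H hH)
  have httlt1 : ∀ H ∈ N, tt H < 1 := by
    intro H hH
    rw [htt, div_lt_one (hdenpos H hH)]
    linarith [hH.2]
  set ts : ℝ := tt Hs with hts
  set z : EuclideanSpace ℝ (Fin n) := b + ts • (y - b) with hz
  have hinnz : ∀ H : Set (EuclideanSpace ℝ (Fin n)),
      ⟪v H, z⟫ = ⟪v H, b⟫ + ts * (⟪v H, y⟫ - ⟪v H, b⟫) := by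
    intro H
    rw [hz, inner_add_right, real_inner_smul_right, inner_sub_right]
  have htspos : 0 < ts := httpos Hs hHsN
  have htslt1 : ts < 1 := httlt1 Hs hHsN
  -- value at Hs is zero
  have hzHs : ⟪v Hs, z⟫ = 0 := by
    have hd := hdenpos Hs hHsN
    have e : ts * (⟪v Hs, y⟫ - ⟪v Hs, b⟫) = -⟪v Hs, b⟫ := by
      simp only [hts, htt]
      rw [div_mul_eq_mul_div, div_eq_iff (ne_of_gt hd)]
      ring
    rw [hinnz, e]
    ring
  -- value at other hyperplanes is positive
  have hzpos : ∀ H ∈ A, H ≠ Hs → 0 < ⟪v H, z⟫ := by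
    intro H hH hne
    by_cases hHN : H ∈ N
    · -- strict minimality
      have hle : ts ≤ tt H := hHsmin H (by rw [hNA, Set.Finite.mem_toFinset]; exact hHN)
      have hne' : ts ≠ tt H := by
        intro heq
        have hpair : (Hs, H) ∈ s := by
          rw [hs, Finset.mem_filter, Finset.mem_product]
          exact ⟨⟨by rw [hNA, Set.Finite.mem_toFinset]; exact hHsN,
            by rw [hNA, Set.Finite.mem_toFinset]; exact hHN⟩, fun h => hne (congrArg id h).symm⟩
        refine hbgen (Hs, H) hpair ?_
        have hdH := hdenpos H hHN
        have hdHs := hdenpos Hs hHsN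
        have heq2 : ⟪v Hs, b⟫ * (⟪v H, b⟫ - ⟪v H, y⟫) = ⟪v H, b⟫ * (⟪v Hs, b⟫ - ⟪v Hs, y⟫) := by
          have h' := heq
          simp only [hts, htt] at h'
          rw [div_eq_div_iff (ne_of_gt hdHs) (ne_of_gt hdH)] at h'
          exact h'
        simp only [hwdef, inner_sub_left, real_inner_smul_left]
        linear_combination heq2
      have hlt : ts < tt H := lt_of_le_of_ne hle hne'
      rw [hinnz]
      have hd := hdenpos H hHN
      have htH : tt H * (⟪v H, b⟫ - ⟪v H, y⟫) = ⟪v H, b⟫ := by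
        simp only [htt]
        exact div_mul_cancel₀ _ (ne_of_gt hd)
      have h1 : ts * (⟪v H, b⟫ - ⟪v H, y⟫) < ⟪v H, b⟫ := by
        calc ts * (⟪v H, b⟫ - ⟪v H, y⟫) < tt H * (⟪v H, b⟫ - ⟪v H, y⟫) :=
              mul_lt_mul_of_pos_right hlt hd
          _ = ⟪v H, b⟫ := htH
      nlinarith [h1]
    · -- not violated: both terms nonneg, first positive
      have hyH : 0 ≤ ⟪v H, y⟫ := by
        by_contra hneg
        exact hHN ⟨hH, lt_of_not_ge hneg⟩
      rw [hinnz]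
      have hbH := hbpos H hH
      nlinarith
  -- z witnesses that Hs is a facet hyperplane
  have hzQpt : z ∈ Qpt A v x₀ := by
    rw [mem_Qpt_base_iff hv]
    intro H hH
    by_cases hne : H = Hs
    · rw [hne, hzHs]
    · exact le_of_lt (hzpos H hH hne)
  have hfacet : Hs ∈ facetHyperplanes A (closure (Ppt A v x₀)) := by
    rw [mem_facet_iff hfin hv hx₀]
    refine ⟨hHsN.1, z, ⟨?_, hzQpt⟩, ?_⟩
    · rw [(hv Hs hHsN.1).2.1]; exact hzHs
    · intro H' hH' hne hmem
      have := hzpos H' hH' hne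
      rw [(hv H' hH').2.1] at hmem
      rw [hmem] at this
      exact lt_irrefl 0 this
  have := hy Hs hfacet
  linarith [hHsN.2]

lemma exists_flip_point (hfin : A.Finite) (hv : GoodV A x₀ v) (hx₀ : x₀ ∈ arrComplement A)
    {H : Set (EuclideanSpace ℝ (Fin n))}
    (hfac : H ∈ facetHyperplanes A (closure (Ppt A v x₀))) :
    ∃ p : EuclideanSpace ℝ (Fin n), p ∈ arrComplement A ∧ ⟪v H, p⟫ < 0 ∧
      ∀ H' ∈ A, H' ≠ H → 0 < ⟪v H', p⟫ := by
  obtain ⟨hH, z, hz, hzgen⟩ := (mem_facet_iff hfin hv hx₀).1 hfac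
  set U : Set (EuclideanSpace ℝ (Fin n)) :=
    ⋂ H' ∈ A \ {H}, {y : EuclideanSpace ℝ (Fin n) | 0 < ⟪v H', y⟫} with hUdef
  have hUopen : IsOpen U :=
    (hfin.subset Set.diff_subset).isOpen_biInter (fun H' _ =>
      isOpen_lt continuous_const (continuous_const.inner continuous_id))
  have hzU : z ∈ U := by
    rw [hUdef]
    simp only [Set.mem_iInter, Set.mem_setOf_eq, Set.mem_diff, Set.mem_singleton_iff, and_imp]
    intro H' hH' hne
    have hq := (mem_Qpt_base_iff hv).1 hz.2 H' hH'
    have hzne : ⟪v H', z⟫ ≠ 0 := by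
      intro h0
      exact hzgen H' hH' hne (by rw [(hv H' hH').2.1]; exact h0)
    exact lt_of_le_of_ne hq (Ne.symm hzne)
  obtain ⟨ε, hε, hball⟩ := Metric.isOpen_iff.1 hUopen z hzU
  have hvH0 : v H ≠ 0 := (hv H hH).1
  have hnv : 0 < ‖v H‖ := norm_pos_iff.2 hvH0
  set p : EuclideanSpace ℝ (Fin n) := z - (ε / (2 * ‖v H‖)) • v H with hp
  have hpball : p ∈ Metric.ball z ε := by
    rw [Metric.mem_ball, dist_eq_norm]
    have : p - z = -((ε / (2 * ‖v H‖)) • v H) := by rw [hp]; abel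
    rw [this, norm_neg, norm_smul, Real.norm_eq_abs, abs_of_pos (by positivity)]
    have : ε / (2 * ‖v H‖) * ‖v H‖ = ε / 2 := by field_simp
    rw [this]; linarith
  have hzH : ⟪v H, z⟫ = 0 := by
    have := hz.1; rw [(hv H hH).2.1] at this; exact this
  have hpneg : ⟪v H, p⟫ < 0 := by
    rw [hp, inner_sub_right, real_inner_smul_right, real_inner_self_eq_norm_sq, hzH]
    have : 0 < ε / (2 * ‖v H‖) * ‖v H‖ ^ 2 := by positivity
    linarith
  have hppos : ∀ H' ∈ A, H' ≠ H → 0 < ⟪v H', p⟫ := by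
    intro H' hH' hne
    have := hball hpball
    rw [hUdef] at this
    simp only [Set.mem_iInter, Set.mem_setOf_eq, Set.mem_diff, Set.mem_singleton_iff, and_imp] at this
    exact this H' hH' hne
  refine ⟨p, ?_, hpneg, hppos⟩
  rw [mem_arrComplement_iff_inner hv]
  intro H' hH'
  by_cases hne : H' = H
  · rw [hne]; exact ne_of_lt hpneg
  · exact ne_of_gt (hppos H' hH' hne)

lemma neg_mem_arrComplement (hv : GoodV A x₀ v) {p : EuclideanSpace ℝ (Fin n)}
    (hp : p ∈ arrComplement A) : -p ∈ arrComplement A := by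
  rw [mem_arrComplement_iff_inner hv] at hp ⊢
  intro H hH
  rw [inner_neg_right, neg_ne_zero]
  exact hp H hH

/-- the sep set of the region adjacent to `B` across the facet `H` -/
lemma sepSet_flip (hfin : A.Finite) (hv : GoodV A x₀ v) (hx₀ : x₀ ∈ arrComplement A)
    {H : Set (EuclideanSpace ℝ (Fin n))} (hH : H ∈ A)
    {p : EuclideanSpace ℝ (Fin n)} (hp : p ∈ arrComplement A) (hpneg : ⟪v H, p⟫ < 0)
    (hppos : ∀ H' ∈ A, H' ≠ H → 0 < ⟪v H', p⟫) :
    sepSet A (closure (Ppt A v x₀)) (closure (Ppt A v p)) = {H} := by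
  rw [sepSet_eq hfin hv hx₀ hp]
  ext H'
  simp only [Set.mem_setOf_eq, Set.mem_singleton_iff]
  constructor
  · rintro ⟨hH', hneg⟩
    by_contra hne
    exact absurd hneg (not_lt_of_gt (hppos H' hH' hne))
  · rintro rfl
    exact ⟨hH, hpneg⟩

/-- the sep set of the region antipodal to the one across `H` -/
lemma sepSet_flip_neg (hfin : A.Finite) (hv : GoodV A x₀ v) (hx₀ : x₀ ∈ arrComplement A)
    {H : Set (EuclideanSpace ℝ (Fin n))} (hH : H ∈ A)
    {p : EuclideanSpace ℝ (Fin n)} (hp : p ∈ arrComplement A) (hpneg : ⟪v H, p⟫ < 0)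
    (hppos : ∀ H' ∈ A, H' ≠ H → 0 < ⟪v H', p⟫) :
    sepSet A (closure (Ppt A v x₀)) (closure (Ppt A v (-p))) = {H' | H' ∈ A ∧ H' ≠ H} := by
  rw [sepSet_eq hfin hv hx₀ (neg_mem_arrComplement hv hp)]
  ext H'
  simp only [Set.mem_setOf_eq, inner_neg_right]
  constructor
  · rintro ⟨hH', hneg⟩
    refine ⟨hH', ?_⟩
    rintro rfl
    have hgt : 0 < ⟪v H', p⟫ := by linarith
    exact absurd hpneg (not_lt_of_gt hgt)
  · rintro ⟨hH', hne⟩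
    exact ⟨hH', by rw [neg_lt, neg_zero]; exact hppos H' hH' hne⟩

lemma orderDimSet_nonempty (hfin : A.Finite) (B : Set (EuclideanSpace ℝ (Fin n))) :
    {d : ℕ | ∃ f : {R : Set (EuclideanSpace ℝ (Fin n)) // IsRegion A R} → (Fin d → ℝ),
      ∀ R₁ R₂, regLE A B R₁.1 R₂.1 ↔ ∀ i, f R₁ i ≤ f R₂ i}.Nonempty := by
  classical
  refine ⟨hfin.toFinset.card, fun R => fun i =>
    if ((hfin.toFinset.equivFin.symm i : Set (EuclideanSpace ℝ (Fin n))) ∈ sepSet A B R.1)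
      then 1 else 0, ?_⟩
  intro R₁ R₂
  constructor
  · intro hle i
    dsimp only
    by_cases hmem : ((hfin.toFinset.equivFin.symm i : Set (EuclideanSpace ℝ (Fin n))) ∈ sepSet A B R₁.1)
    · rw [if_pos hmem, if_pos (hle hmem)]
    · rw [if_neg hmem]
      split <;> norm_num
  · intro hle H hH
    have hHA : H ∈ A := hH.1
    set j := hfin.toFinset.equivFin ⟨H, hfin.mem_toFinset.2 hHA⟩ with hj
    have hsymm : hfin.toFinset.equivFin.symm j = ⟨H, hfin.mem_toFinset.2 hHA⟩ :=
      Equiv.symm_apply_apply _ _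
    have h1 := hle j
    dsimp only at h1
    rw [hsymm] at h1
    simp only at h1
    rw [if_pos hH] at h1
    by_contra hnot
    rw [if_neg hnot] at h1
    norm_num at h1

end ArrAux


open ArrAux

/-- **Proposition (Reading, Proposition 7).** The order dimension of 𝒫(𝒜,B) is at least the
number of facets of `B`, which is at least the rank of `A`. -/
theorem facets_le_orderDim_and_rank_le_facets {n : ℕ}
    (A : Set (Set (EuclideanSpace ℝ (Fin n)))) (B : Set (EuclideanSpace ℝ (Fin n)))
    (hA : IsCentralArrangement A) (hB : IsRegion A B) :
    (facetHyperplanes A B).ncard ≤ regionOrderDim A B ∧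
      arrRank A ≤ (facetHyperplanes A B).ncard := by
  classical
  obtain ⟨hfin, hAne, hhyp⟩ := hA
  obtain ⟨x₀, hx₀, hBeq⟩ := hB
  obtain ⟨v, hv⟩ := exists_goodV ⟨hfin, hAne, hhyp⟩ hx₀
  have hBeq' : B = closure (Ppt A v x₀) := by
    rw [hBeq, connectedComponentIn_eq_Ppt hv hx₀]
  subst hBeq'
  set F : Set (Set (EuclideanSpace ℝ (Fin n))) := facetHyperplanes A (closure (Ppt A v x₀))
    with hF
  have hFfin : F.Finite := hfin.subset (fun H hH => hH.1)
  constructor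
  · -- order dimension lower bound
    apply le_csInf (orderDimSet_nonempty hfin _)
    intro d hd
    obtain ⟨f, hf⟩ := hd
    have hpex : ∀ H : ↥F, ∃ p : EuclideanSpace ℝ (Fin n), p ∈ arrComplement A ∧
        ⟪v H.1, p⟫ < 0 ∧ ∀ H' ∈ A, H' ≠ H.1 → 0 < ⟪v H', p⟫ :=
      fun H => exists_flip_point hfin hv hx₀ H.2
    choose p hp1 hp2 hp3 using hpex
    set aR : ↥F → {R : Set (EuclideanSpace ℝ (Fin n)) // IsRegion A R} :=
      fun H => ⟨closure (Ppt A v (p H)), (isRegion_iff hv).2 ⟨p H, hp1 H, rfl⟩⟩ with haR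
    set bR : ↥F → {R : Set (EuclideanSpace ℝ (Fin n)) // IsRegion A R} :=
      fun H => ⟨closure (Ppt A v (-(p H))),
        (isRegion_iff hv).2 ⟨-(p H), neg_mem_arrComplement hv (hp1 H), rfl⟩⟩ with hbR
    have hsep_a : ∀ H : ↥F, sepSet A (closure (Ppt A v x₀)) (aR H).1 = {H.1} :=
      fun H => sepSet_flip hfin hv hx₀ H.2.1 (hp1 H) (hp2 H) (hp3 H)
    have hsep_b : ∀ H : ↥F, sepSet A (closure (Ppt A v x₀)) (bR H).1
        = {H' | H' ∈ A ∧ H' ≠ H.1} :=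
      fun H => sepSet_flip_neg hfin hv hx₀ H.2.1 (hp1 H) (hp2 H) (hp3 H)
    have hreg1 : ∀ G H' : ↥F, G ≠ H' →
        regLE A (closure (Ppt A v x₀)) (aR G).1 (bR H').1 := by
      intro G H' hne
      show sepSet _ _ _ ⊆ sepSet _ _ _
      rw [hsep_a, hsep_b]
      intro X hX
      rw [Set.mem_singleton_iff] at hX
      subst hX
      exact ⟨G.2.1, fun h => hne (Subtype.ext h)⟩
    have hreg2 : ∀ H : ↥F, ¬ regLE A (closure (Ppt A v x₀)) (aR H).1 (bR H).1 := by
      intro H hle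
      have h1 : H.1 ∈ sepSet A (closure (Ppt A v x₀)) (aR H).1 := by
        rw [hsep_a]; exact rfl
      have h2 := hle h1
      rw [hsep_b] at h2
      exact h2.2 rfl
    have hcex : ∀ H : ↥F, ∃ i : Fin d, f (bR H) i < f (aR H) i := by
      intro H
      by_contra hno
      push_neg at hno
      exact hreg2 H ((hf (aR H) (bR H)).2 hno)
    choose c hc using hcex
    have hcinj : Function.Injective c := by
      intro G H' heq
      by_contra hne
      have h1 := hc G
      have h2 := hc H'
      rw [← heq] at h2
      have h3 := (hf (aR G) (bR H')).1 (hreg1 G H' hne) (c G)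
      have h4 := (hf (aR H') (bR G)).1 (hreg1 H' G (Ne.symm hne)) (c G)
      linarith
    calc F.ncard = Nat.card ↥F := (Nat.card_coe_set_eq F).symm
      _ ≤ Nat.card (Fin d) := Nat.card_le_card_of_injective c hcinj
      _ = d := by simp
  · -- rank upper bound
    set Wall : Submodule ℝ (EuclideanSpace ℝ (Fin n)) := Submodule.span ℝ (v '' A) with hWall
    set Wf : Submodule ℝ (EuclideanSpace ℝ (Fin n)) := Submodule.span ℝ (v '' F) with hWf
    have hIA : ⋂₀ A = (Wallᗮ : Set (EuclideanSpace ℝ (Fin n))) := by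
      ext x
      rw [Set.mem_sInter, SetLike.mem_coe, Submodule.mem_orthogonal]
      constructor
      · intro h u hu
        have hsub : v '' A ⊆ (kerv x : Set (EuclideanSpace ℝ (Fin n))) := by
          rintro u' ⟨H, hH, rfl⟩
          rw [SetLike.mem_coe, mem_kerv, real_inner_comm]
          have := h H hH
          rw [(hv H hH).2.1] at this
          exact this
        have := (Submodule.span_le.2 hsub) hu
        rw [mem_kerv] at this
        rw [real_inner_comm]
        exact this
      · intro h H hH
        rw [(hv H hH).2.1]
        exact h (v H) (Submodule.subset_span ⟨H, hH, rfl⟩)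
    have hrank : arrRank A = Module.finrank ℝ Wall := by
      rw [arrRank, hIA, Submodule.span_eq, Submodule.orthogonal_orthogonal]
    have hWle : Wall ≤ Wf := by
      apply Submodule.span_le.2
      rintro u ⟨H, hH, rfl⟩
      rw [SetLike.mem_coe, ← Submodule.orthogonal_orthogonal Wf, Submodule.mem_orthogonal]
      intro u hu
      have huf : ∀ G ∈ F, ⟪v G, u⟫ = 0 := fun G hG =>
        (Submodule.mem_orthogonal Wf u).1 hu (v G) (Submodule.subset_span ⟨G, hG, rfl⟩)
      have h1 : u ∈ Qpt A v x₀ :=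
        Qf_subset_base hfin hv hx₀ (fun G hG => (huf G hG).ge)
      have h2 : -u ∈ Qpt A v x₀ :=
        Qf_subset_base hfin hv hx₀ (fun G hG => by rw [inner_neg_right, huf G hG, neg_zero])
      have ha := (mem_Qpt_base_iff hv).1 h1 H hH
      have hb := (mem_Qpt_base_iff hv).1 h2 H hH
      rw [inner_neg_right] at hb
      rw [real_inner_comm]
      linarith
    have himgfin : (v '' F).Finite := hFfin.image v
    haveI := himgfin.fintype
    have h5 : Module.finrank ℝ Wf ≤ (v '' F).ncard := by
      rw [Set.ncard_eq_toFinset_card']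
      exact finrank_span_le_card (v '' F)
    calc arrRank A = Module.finrank ℝ Wall := hrank
      _ ≤ Module.finrank ℝ Wf := Submodule.finrank_mono hWle
      _ ≤ (v '' F).ncard := h5
      _ ≤ F.ncard := Set.ncard_image_le hFfin
end
end

section
/- Let 𝒜 be a central hyperplane arrangement in ℝⁿ with base region B, and let 𝒜′ be a rank-two subarrangement of 𝒜. If H₁ and H₂ are basic in 𝒜′ and H ∈ 𝒜′ is not basic in 𝒜′, then H ∩ B = H₁ ∩ H₂ ∩ B. -/
open scoped RealInnerProductSpace

noncomputable section

variable {n : ℕ}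

/-- `A'` is a rank-two subarrangement of `A`: a subset of cardinality greater than one
consisting of all the hyperplanes of `A` containing some fixed codimension-two subspace. -/
def IsRankTwoSub (A A' : Set (Set (EuclideanSpace ℝ (Fin n)))) : Prop :=
  1 < A'.ncard ∧ ∃ L : Submodule ℝ (EuclideanSpace ℝ (Fin n)),
    Module.finrank ℝ L = n - 2 ∧ A' = {H | H ∈ A ∧ (L : Set (EuclideanSpace ℝ (Fin n))) ⊆ H}

namespace BasicContainmentAux

/-- A hyperplane is the coercion of a codimension-one submodule. -/
lemma hyperplane_submodule {n : ℕ} {v : EuclideanSpace ℝ (Fin n)} (hv : v ≠ 0) :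
    ∃ K : Submodule ℝ (EuclideanSpace ℝ (Fin n)),
      (K : Set (EuclideanSpace ℝ (Fin n))) = {x | ⟪v, x⟫ = 0} ∧
      Module.finrank ℝ K = n - 1 ∧ 1 ≤ n := by
  set f : EuclideanSpace ℝ (Fin n) →ₗ[ℝ] ℝ := innerₛₗ ℝ v with hf
  have hvv : ⟪v, v⟫ ≠ 0 := fun h => hv (inner_self_eq_zero.mp h)
  have hrange : LinearMap.range f = ⊤ := by
    rw [LinearMap.range_eq_top]
    intro r
    refine ⟨(r / ⟪v, v⟫) • v, ?_⟩
    simp only [hf, innerₛₗ_apply_apply, real_inner_smul_right]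
    exact div_mul_cancel₀ r hvv
  have hrn := LinearMap.finrank_range_add_finrank_ker f
  rw [hrange, finrank_top, Module.finrank_self, finrank_euclideanSpace_fin] at hrn
  refine ⟨LinearMap.ker f, ?_, by omega, by omega⟩
  ext x
  simp [hf, LinearMap.mem_ker, innerₛₗ_apply_apply]

/-- A linear subspace contained in every hyperplane of an arrangement is contained in the
closure of every connected component of the complement. -/
lemma subspace_subset_region {n : ℕ} (A' : Set (Set (EuclideanSpace ℝ (Fin n))))
    (hhyp : ∀ H ∈ A', IsHyperplane H)
    (L : Set (EuclideanSpace ℝ (Fin n))) (hL : ∀ H ∈ A', L ⊆ H)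
    (x₀ : EuclideanSpace ℝ (Fin n)) (hx₀ : x₀ ∈ arrComplement A') :
    L ⊆ closure (connectedComponentIn (arrComplement A') x₀) := by
  intro z hz
  have key : ∀ t : ℝ, 0 < t →
      z + t • x₀ ∈ connectedComponentIn (arrComplement A') x₀ := by
    intro t ht
    have hseg : segment ℝ x₀ (z + t • x₀) ⊆ arrComplement A' := by
      rintro p ⟨a, b, ha, hb, hab, rfl⟩
      simp only [arrComplement, Set.mem_compl_iff]
      intro hp
      rw [Set.mem_iUnion₂] at hp
      obtain ⟨Hh, hHm, hp⟩ := hp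
      obtain ⟨v, hv, hHeq⟩ := hhyp Hh hHm
      have hzv : ⟪v, z⟫ = 0 := by
        have := hL Hh hHm hz; rw [hHeq] at this; exact this
      have hx₀v : ⟪v, x₀⟫ ≠ 0 := fun h0 =>
        hx₀ (Set.mem_biUnion hHm (by rw [hHeq]; exact h0))
      rw [hHeq] at hp
      have hcalc : ⟪v, a • x₀ + b • (z + t • x₀)⟫ = (a + b * t) * ⟪v, x₀⟫ := by
        simp only [inner_add_right, real_inner_smul_right, hzv]
        ring
      have hpos : 0 < a + b * t := by
        rcases hb.lt_or_eq with h | h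
        · have := mul_pos h ht; linarith
        · rw [← h] at hab ⊢; simp only [zero_mul, add_zero] at *; linarith
      have : (a + b * t) * ⟪v, x₀⟫ ≠ 0 := mul_ne_zero (ne_of_gt hpos) hx₀v
      exact this (hcalc ▸ hp)
    have hsub : segment ℝ x₀ (z + t • x₀) ⊆ connectedComponentIn (arrComplement A') x₀ :=
      (convex_segment _ _).isPreconnected.subset_connectedComponentIn
        (left_mem_segment ℝ _ _) hseg
    exact hsub (right_mem_segment ℝ _ _)
  have htend : Filter.Tendsto (fun t : ℝ => z + t • x₀) (nhdsWithin 0 (Set.Ioi 0)) (nhds z) := by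
    have hc : Continuous (fun t : ℝ => z + t • x₀) := by continuity
    have := hc.tendsto 0
    simp only [zero_smul, add_zero] at this
    exact this.mono_left nhdsWithin_le_nhds
  exact mem_closure_of_tendsto htend
    (by filter_upwards [self_mem_nhdsWithin] with t ht using key t ht)

end BasicContainmentAux

/-- **Lemma (Reading, Lemma 3).** If `H₁` and `H₂` are (the two) basic hyperplanes in the
rank-two subarrangement `A'` and `H ∈ A'` is not basic, then `H ∩ B = H₁ ∩ H₂ ∩ B`. -/
theorem basic_containment {n : ℕ}
    (A : Set (Set (EuclideanSpace ℝ (Fin n)))) (B : Set (EuclideanSpace ℝ (Fin n)))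
    (hA : IsCentralArrangement A) (hB : IsRegion A B)
    (A' : Set (Set (EuclideanSpace ℝ (Fin n)))) (hA' : IsRankTwoSub A A')
    (H₁ H₂ H : Set (EuclideanSpace ℝ (Fin n)))
    (h₁ : IsBasicIn A' B H₁) (h₂ : IsBasicIn A' B H₂) (h₁₂ : H₁ ≠ H₂)
    (hH : H ∈ A') (hHnb : ¬ IsBasicIn A' B H) :
    H ∩ B = H₁ ∩ H₂ ∩ B := by
  classical
  obtain ⟨hAfin, -, hAhyp⟩ := hA
  obtain ⟨hcard, L, hLrank, hA'eq⟩ := hA'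
  have hsubA : A' ⊆ A := by rw [hA'eq]; exact fun K h => h.1
  have hLsub : ∀ K ∈ A', (L : Set (EuclideanSpace ℝ (Fin n))) ⊆ K := by
    rw [hA'eq]; exact fun K h => h.2
  have hhyp' : ∀ K ∈ A', IsHyperplane K := fun K h => hAhyp K (hsubA h)
  have hH₁ : H₁ ∈ A' := h₁.1
  have hH₂ : H₂ ∈ A' := h₂.1
  obtain ⟨v₁, hv₁, hH₁eq⟩ := hhyp' H₁ hH₁
  obtain ⟨v₂, hv₂, hH₂eq⟩ := hhyp' H₂ hH₂
  obtain ⟨v, hv, hHeq⟩ := hhyp' H hH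
  obtain ⟨K₁, hK₁coe, hK₁rank, hn1⟩ := BasicContainmentAux.hyperplane_submodule hv₁
  obtain ⟨K₂, hK₂coe, hK₂rank, -⟩ := BasicContainmentAux.hyperplane_submodule hv₂
  obtain ⟨K, hKcoe, hKrank, -⟩ := BasicContainmentAux.hyperplane_submodule hv
  rw [← hH₁eq] at hK₁coe
  rw [← hH₂eq] at hK₂coe
  rw [← hHeq] at hKcoe
  have hK₁₂ne : K₁ ≠ K₂ := fun h => h₁₂ (by rw [← hK₁coe, ← hK₂coe, h])
  -- n ≥ 2
  have hn2 : 2 ≤ n := by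
    by_contra hlt
    have hn : n = 1 := by omega
    have e1 : K₁ = ⊥ := Submodule.finrank_eq_zero.mp (by omega)
    have e2 : K₂ = ⊥ := Submodule.finrank_eq_zero.mp (by omega)
    exact hK₁₂ne (e1.trans e2.symm)
  -- L is the intersection of the two hyperplanes
  have hLle : L ≤ K₁ ⊓ K₂ := by
    intro x hx
    rw [Submodule.mem_inf]
    refine ⟨?_, ?_⟩
    · show x ∈ K₁
      rw [← SetLike.mem_coe, hK₁coe]; exact hLsub H₁ hH₁ hx
    · show x ∈ K₂
      rw [← SetLike.mem_coe, hK₂coe]; exact hLsub H₂ hH₂ hx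
  have hLeq : L = K₁ ⊓ K₂ := by
    rcases hLle.lt_or_eq with hltL | heq
    · exfalso
      have hlt1 : Module.finrank ℝ L < Module.finrank ℝ ↥(K₁ ⊓ K₂) :=
        Submodule.finrank_lt_finrank_of_lt hltL
      have hle1 : Module.finrank ℝ ↥(K₁ ⊓ K₂) ≤ Module.finrank ℝ K₁ :=
        Submodule.finrank_mono inf_le_left
      have h3 : K₁ ⊓ K₂ = K₁ := Submodule.eq_of_le_of_finrank_le inf_le_left (by omega)
      have h4 : K₁ ≤ K₂ := h3 ▸ inf_le_right
      exact hK₁₂ne (Submodule.eq_of_le_of_finrank_le h4 (by omega))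
    · exact heq
  -- the region B' of A' containing B
  obtain ⟨x₀, hx₀, hBdef⟩ := hB
  have hcompl : arrComplement A ⊆ arrComplement A' :=
    Set.compl_subset_compl.mpr (Set.biUnion_mono hsubA (fun _ _ => subset_rfl))
  have hx₀' : x₀ ∈ arrComplement A' := hcompl hx₀
  set B' := closure (connectedComponentIn (arrComplement A') x₀) with hB'def
  have hBB' : B ⊆ B' := by
    rw [hBdef]
    exact closure_mono (connectedComponentIn_mono x₀ hcompl)
  have hreg : IsRegion A' B' := ⟨x₀, hx₀', rfl⟩
  have hLB' : (L : Set (EuclideanSpace ℝ (Fin n))) ⊆ B' :=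
    BasicContainmentAux.subspace_subset_region A' hhyp' L hLsub x₀ hx₀'
  have hspan_ne : Submodule.span ℝ (H ∩ B') ≠ Submodule.span ℝ H :=
    fun h => hHnb ⟨hH, B', hreg, hBB', h⟩
  have hspanH : Submodule.span ℝ H = K := by rw [← hKcoe]; exact Submodule.span_eq K
  -- the key containment
  have hmain : H ∩ B ⊆ (L : Set (EuclideanSpace ℝ (Fin n))) := by
    intro x hx
    by_contra hxL
    apply hspan_ne
    rw [hspanH]
    have hK'le : Submodule.span ℝ (H ∩ B') ≤ K :=
      Submodule.span_le.mpr (by rw [hKcoe]; exact Set.inter_subset_left)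
    have hLleK' : L ≤ Submodule.span ℝ (H ∩ B') :=
      fun y hy => Submodule.subset_span ⟨hLsub H hH hy, hLB' hy⟩
    have hxK' : x ∈ Submodule.span ℝ (H ∩ B') :=
      Submodule.subset_span ⟨hx.1, hBB' hx.2⟩
    have hne : L ≠ Submodule.span ℝ (H ∩ B') := by
      intro h
      apply hxL
      rw [SetLike.mem_coe, h]
      exact hxK'
    have hlt1 : Module.finrank ℝ L < Module.finrank ℝ (Submodule.span ℝ (H ∩ B')) :=
      Submodule.finrank_lt_finrank_of_lt (lt_of_le_of_ne hLleK' hne)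
    have hle1 : Module.finrank ℝ (Submodule.span ℝ (H ∩ B')) ≤ Module.finrank ℝ K :=
      Submodule.finrank_mono hK'le
    exact Submodule.eq_of_le_of_finrank_le hK'le (by omega)
  -- conclusion
  ext x
  constructor
  · rintro ⟨hxH, hxB⟩
    have hxL := hmain ⟨hxH, hxB⟩
    exact ⟨⟨hLsub H₁ hH₁ hxL, hLsub H₂ hH₂ hxL⟩, hxB⟩
  · rintro ⟨⟨hx1, hx2⟩, hxB⟩
    have hxL : x ∈ (L : Set (EuclideanSpace ℝ (Fin n))) := by
      rw [hLeq, Submodule.coe_inf]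
      exact ⟨by rw [hK₁coe]; exact hx1, by rw [hK₂coe]; exact hx2⟩
    exact ⟨hLsub H hH hxL, hxB⟩
end
end

section
/- Let 𝒜 be a central hyperplane arrangement in ℝⁿ with base region B, let I ⊆ 𝒜, and let H ∈ I be a sink of the sub-digraph of the basic digraph 𝒟(𝒜,B) induced by I. Let 𝒜⁻ := 𝒜 − {H} and let B⁻ be the region of 𝒜⁻ containing B. Then the shards of (𝒜,B) contained in hyperplanes of I − {H} are exactly the shards of (𝒜⁻,B⁻) contained in hyperplanes of I − {H}. -/
open scoped RealInnerProductSpace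

noncomputable section

variable {n : ℕ}

/-- The hyperplane `H` with the cutting loci removed: for each rank-two subarrangement
containing `H` in which `H` is not basic, the codimension-two intersection is removed. -/
def shardCut (A : Set (Set (EuclideanSpace ℝ (Fin n)))) (B H : Set (EuclideanSpace ℝ (Fin n))) :
    Set (EuclideanSpace ℝ (Fin n)) :=
  H \ ⋃ H' ∈ {H' | H' ∈ A ∧ H' ≠ H ∧ ¬ IsBasicIn (pencil A H H') B H}, (H ∩ H')

/-- `Sg` is a shard of `(A,B)` contained in the hyperplane `H`: a connected component of `H`
with the cutting loci removed. -/
def IsShardOf (A : Set (Set (EuclideanSpace ℝ (Fin n))))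
    (B H Sg : Set (EuclideanSpace ℝ (Fin n))) : Prop :=
  H ∈ A ∧ ∃ x ∈ shardCut A B H, Sg = connectedComponentIn (shardCut A B H) x

/-- U(Σ): the regions meeting the shard `Sg` in codimension one whose separating set
contains the hyperplane `H` containing `Sg`. -/
def upperRegions (A : Set (Set (EuclideanSpace ℝ (Fin n))))
    (B H Sg : Set (EuclideanSpace ℝ (Fin n))) : Set (Set (EuclideanSpace ℝ (Fin n))) :=
  {R | IsRegion A R ∧ Submodule.span ℝ (R ∩ Sg) = Submodule.span ℝ H ∧ H ∈ sepSet A B R}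

/-- L(Σ): the regions meeting the shard `Sg` in codimension one whose separating set
does not contain the hyperplane `H` containing `Sg`. -/
def lowerRegions (A : Set (Set (EuclideanSpace ℝ (Fin n))))
    (B H Sg : Set (EuclideanSpace ℝ (Fin n))) : Set (Set (EuclideanSpace ℝ (Fin n))) :=
  {R | IsRegion A R ∧ Submodule.span ℝ (R ∩ Sg) = Submodule.span ℝ H ∧ H ∉ sepSet A B R}

/-- `J` is a minimal element of U(Σ), as a subposet of 𝒫(𝒜,B). -/
def MinimalInU (A : Set (Set (EuclideanSpace ℝ (Fin n))))
    (B H Sg J : Set (EuclideanSpace ℝ (Fin n))) : Prop :=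
  J ∈ upperRegions A B H Sg ∧
    ∀ R ∈ upperRegions A B H Sg, regLE A B R J → regLE A B J R

/-- `M` is a maximal element of L(Σ), as a subposet of 𝒫(𝒜,B). -/
def MaximalInL (A : Set (Set (EuclideanSpace ℝ (Fin n))))
    (B H Sg M : Set (EuclideanSpace ℝ (Fin n))) : Prop :=
  M ∈ lowerRegions A B H Sg ∧
    ∀ R ∈ lowerRegions A B H Sg, regLE A B M R → regLE A B R M

/-- `J` covers `Jst` in the poset of regions 𝒫(𝒜,B). -/
def CoversReg (A : Set (Set (EuclideanSpace ℝ (Fin n))))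
    (B J Jst : Set (EuclideanSpace ℝ (Fin n))) : Prop :=
  IsRegion A Jst ∧ regLT A B Jst J ∧
    ∀ R, IsRegion A R → regLT A B Jst R → regLT A B R J → False

/-- `R` is an upper bound of the set `X` of regions in 𝒫(𝒜,B). -/
def regIsUB (A : Set (Set (EuclideanSpace ℝ (Fin n)))) (B : Set (EuclideanSpace ℝ (Fin n)))
    (X : Set (Set (EuclideanSpace ℝ (Fin n)))) (R : Set (EuclideanSpace ℝ (Fin n))) : Prop :=
  ∀ R' ∈ X, regLE A B R' R

/-- `R` is the least upper bound of the set `X` of regions in 𝒫(𝒜,B). -/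
def regIsLUB (A : Set (Set (EuclideanSpace ℝ (Fin n)))) (B : Set (EuclideanSpace ℝ (Fin n)))
    (X : Set (Set (EuclideanSpace ℝ (Fin n)))) (R : Set (EuclideanSpace ℝ (Fin n))) : Prop :=
  regIsUB A B X R ∧ ∀ R', IsRegion A R' → regIsUB A B X R' → regLE A B R R'

/-- `R` is a lower bound of the set `X` of regions in 𝒫(𝒜,B). -/
def regIsLB (A : Set (Set (EuclideanSpace ℝ (Fin n)))) (B : Set (EuclideanSpace ℝ (Fin n)))
    (X : Set (Set (EuclideanSpace ℝ (Fin n)))) (R : Set (EuclideanSpace ℝ (Fin n))) : Prop :=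
  ∀ R' ∈ X, regLE A B R R'

/-- `R` is the greatest lower bound of the set `X` of regions in 𝒫(𝒜,B). -/
def regIsGLB (A : Set (Set (EuclideanSpace ℝ (Fin n)))) (B : Set (EuclideanSpace ℝ (Fin n)))
    (X : Set (Set (EuclideanSpace ℝ (Fin n)))) (R : Set (EuclideanSpace ℝ (Fin n))) : Prop :=
  regIsLB A B X R ∧ ∀ R', IsRegion A R' → regIsLB A B X R' → regLE A B R' R

/-- `J` is join-irreducible in 𝒫(𝒜,B): there is no set `X` of regions with `J ∉ X`
whose least upper bound is `J`. -/
def JoinIrredReg (A : Set (Set (EuclideanSpace ℝ (Fin n))))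
    (B J : Set (EuclideanSpace ℝ (Fin n))) : Prop :=
  IsRegion A J ∧ ¬ ∃ X : Set (Set (EuclideanSpace ℝ (Fin n))),
    (∀ R ∈ X, IsRegion A R) ∧ J ∉ X ∧ regIsLUB A B X J

/-- `M` is meet-irreducible in 𝒫(𝒜,B): there is no set `X` of regions with `M ∉ X`
whose greatest lower bound is `M`. -/
def MeetIrredReg (A : Set (Set (EuclideanSpace ℝ (Fin n))))
    (B M : Set (EuclideanSpace ℝ (Fin n))) : Prop :=
  IsRegion A M ∧ ¬ ∃ X : Set (Set (EuclideanSpace ℝ (Fin n))),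
    (∀ R ∈ X, IsRegion A R) ∧ M ∉ X ∧ regIsGLB A B X M

/-- `(J,M)` is a subcritical pair in the poset of regions 𝒫(𝒜,B). -/
def SubcritReg (A : Set (Set (EuclideanSpace ℝ (Fin n))))
    (B J M : Set (EuclideanSpace ℝ (Fin n))) : Prop :=
  IsRegion A J ∧ IsRegion A M ∧ ¬ regLE A B J M ∧
    (∀ X, IsRegion A X → regLT A B X J → regLE A B X M) ∧
    (∀ X, IsRegion A X → regLT A B M X → regLE A B J X)

section Aux
variable {n : ℕ}

lemma hyp_set_eq (v : EuclideanSpace ℝ (Fin n)) :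
    {x : EuclideanSpace ℝ (Fin n) | ⟪v, x⟫ = 0} = ((ℝ ∙ v)ᗮ : Set (EuclideanSpace ℝ (Fin n))) := by
  ext x
  simp [Submodule.mem_orthogonal_singleton_iff_inner_right]

lemma hyp_closed {H : Set (EuclideanSpace ℝ (Fin n))}
    (h : ∃ v : EuclideanSpace ℝ (Fin n), v ≠ 0 ∧ H = {x | ⟪v, x⟫ = 0}) : IsClosed H := by
  obtain ⟨v, -, rfl⟩ := h
  rw [hyp_set_eq]
  exact Submodule.closed_of_finiteDimensional _

lemma finrank_hyp {v : EuclideanSpace ℝ (Fin n)} (hv : v ≠ 0) :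
    Module.finrank ℝ ((ℝ ∙ v)ᗮ) + 1 = n := by
  have h := Submodule.finrank_add_finrank_orthogonal (K := (ℝ ∙ v)) (𝕜 := ℝ)
  rw [finrank_span_singleton hv] at h
  rw [finrank_euclideanSpace_fin] at h
  omega

lemma sup_hyp_top {u v : EuclideanSpace ℝ (Fin n)} (hu : u ≠ 0) (hv : v ≠ 0)
    (hne : ((ℝ ∙ u)ᗮ : Set (EuclideanSpace ℝ (Fin n))) ≠ ((ℝ ∙ v)ᗮ)) :
    Module.finrank ℝ ((ℝ ∙ u)ᗮ ⊓ (ℝ ∙ v)ᗮ : Submodule ℝ (EuclideanSpace ℝ (Fin n))) + 2 = n := by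
  have hne' : ((ℝ ∙ u)ᗮ : Submodule ℝ (EuclideanSpace ℝ (Fin n))) ≠ (ℝ ∙ v)ᗮ :=
    fun h => hne (by rw [h])
  have hU := finrank_hyp hu
  have hV := finrank_hyp hv
  have key := Submodule.finrank_sup_add_finrank_inf_eq ((ℝ ∙ u)ᗮ) ((ℝ ∙ v)ᗮ)
  have hsup : Module.finrank ℝ ((ℝ ∙ u)ᗮ ⊔ (ℝ ∙ v)ᗮ : Submodule ℝ (EuclideanSpace ℝ (Fin n))) = n := by
    by_contra hne2
    have hle : Module.finrank ℝ ((ℝ ∙ u)ᗮ ⊔ (ℝ ∙ v)ᗮ : Submodule ℝ (EuclideanSpace ℝ (Fin n))) ≤ n := by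
      simpa [finrank_euclideanSpace_fin] using
        Submodule.finrank_le ((ℝ ∙ u)ᗮ ⊔ (ℝ ∙ v)ᗮ : Submodule ℝ (EuclideanSpace ℝ (Fin n)))
    have heq : ((ℝ ∙ u)ᗮ : Submodule ℝ (EuclideanSpace ℝ (Fin n))) = (ℝ ∙ u)ᗮ ⊔ (ℝ ∙ v)ᗮ := by
      apply Submodule.eq_of_le_of_finrank_le le_sup_left
      omega
    have hvu : ((ℝ ∙ v)ᗮ : Submodule ℝ (EuclideanSpace ℝ (Fin n))) ≤ (ℝ ∙ u)ᗮ := by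
      rw [heq]; exact le_sup_right
    exact hne' (Submodule.eq_of_le_of_finrank_le hvu (by omega)).symm
  omega

lemma hyp_inter_eq {u v w : EuclideanSpace ℝ (Fin n)} (hu : u ≠ 0) (hv : v ≠ 0) (hw : w ≠ 0)
    (hne12 : ((ℝ ∙ u)ᗮ : Set (EuclideanSpace ℝ (Fin n))) ≠ ((ℝ ∙ v)ᗮ))
    (hne23 : ((ℝ ∙ v)ᗮ : Set (EuclideanSpace ℝ (Fin n))) ≠ ((ℝ ∙ w)ᗮ))
    (hsub : ((ℝ ∙ v)ᗮ : Set (EuclideanSpace ℝ (Fin n))) ∩ ((ℝ ∙ w)ᗮ) ⊆ ((ℝ ∙ u)ᗮ)) :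
    ((ℝ ∙ u)ᗮ : Set (EuclideanSpace ℝ (Fin n))) ∩ ((ℝ ∙ v)ᗮ) =
      ((ℝ ∙ v)ᗮ : Set (EuclideanSpace ℝ (Fin n))) ∩ ((ℝ ∙ w)ᗮ) := by
  have h1 := sup_hyp_top hu hv hne12
  have h2 := sup_hyp_top hv hw hne23
  have hle : ((ℝ ∙ v)ᗮ ⊓ (ℝ ∙ w)ᗮ : Submodule ℝ (EuclideanSpace ℝ (Fin n))) ≤ (ℝ ∙ u)ᗮ ⊓ (ℝ ∙ v)ᗮ := by
    refine le_inf ?_ inf_le_left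
    intro x hx
    exact hsub (by exact hx)
  have := Submodule.eq_of_le_of_finrank_le hle (by omega)
  rw [← Submodule.coe_inf, ← Submodule.coe_inf, this]

lemma mem_arrComplement' {A : Set (Set (EuclideanSpace ℝ (Fin n)))} {x : EuclideanSpace ℝ (Fin n)} :
    x ∈ arrComplement A ↔ ∀ K ∈ A, x ∉ K := by
  simp [arrComplement]

lemma arrComplement_mono {A A' : Set (Set (EuclideanSpace ℝ (Fin n)))} (h : A' ⊆ A) :
    arrComplement A ⊆ arrComplement A' := by
  intro x hx
  rw [mem_arrComplement'] at hx ⊢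
  exact fun K hK => hx K (h hK)

lemma isOpen_arrComplement {A : Set (Set (EuclideanSpace ℝ (Fin n)))} (hfin : A.Finite)
    (hcl : ∀ K ∈ A, IsClosed K) : IsOpen (arrComplement A) := by
  rw [arrComplement, isOpen_compl_iff]
  exact hfin.isClosed_biUnion hcl

lemma mem_compIn_of_closure {W : Set (EuclideanSpace ℝ (Fin n))} (hW : IsOpen W)
    {x y : EuclideanSpace ℝ (Fin n)} (hy : y ∈ closure (connectedComponentIn W x))
    (hyW : y ∈ W) : y ∈ connectedComponentIn W x := by
  have hCy : IsOpen (connectedComponentIn W y) := hW.connectedComponentIn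
  have hnb : connectedComponentIn W y ∈ nhds y := hCy.mem_nhds (mem_connectedComponentIn hyW)
  obtain ⟨z, hz1, hz2⟩ := mem_closure_iff_nhds.mp hy _ hnb
  have e1 := connectedComponentIn_eq hz1
  have e2 := connectedComponentIn_eq hz2
  rw [e2, ← e1]
  exact mem_connectedComponentIn hyW

lemma span_boundary {P : Set (Set (EuclideanSpace ℝ (Fin n)))} (hfin : P.Finite)
    (hcl : ∀ K ∈ P, IsClosed K) {v : EuclideanSpace ℝ (Fin n)} (hv : v ≠ 0)
    {H : Set (EuclideanSpace ℝ (Fin n))} (hHdef : H = {x | ⟪v, x⟫ = 0}) (hHP : H ∈ P)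
    {x y : EuclideanSpace ℝ (Fin n)}
    (hy : y ∈ closure (connectedComponentIn (arrComplement P) x))
    (hyH : y ∈ H) (hyavoid : ∀ K ∈ P, K ≠ H → y ∉ K) :
    Submodule.span ℝ (H ∩ closure (connectedComponentIn (arrComplement P) x)) =
      Submodule.span ℝ H := by
  set C := connectedComponentIn (arrComplement P) x with hC
  have hFcl : IsClosed (⋃ K ∈ P \ {H}, K) :=
    (hfin.subset Set.diff_subset).isClosed_biUnion fun K hK => hcl K hK.1
  have hyF : y ∈ (⋃ K ∈ P \ {H}, K)ᶜ := by
    simp only [Set.mem_compl_iff, Set.mem_iUnion, not_exists]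
    rintro K ⟨hK1, hK2⟩ hyK
    exact hyavoid K hK1 (by simpa using hK2) hyK
  obtain ⟨ε, hε, hball⟩ := Metric.mem_nhds_iff.mp (hFcl.isOpen_compl.mem_nhds hyF)
  obtain ⟨z, hzball, hzC⟩ :=
    mem_closure_iff_nhds.mp hy (Metric.ball y ε) (Metric.ball_mem_nhds y hε)
  have hzP : z ∈ arrComplement P := connectedComponentIn_subset _ _ hzC
  have hzH : z ∉ H := (mem_arrComplement'.mp hzP) H hHP
  set s : ℝ := ⟪v, z⟫ with hs
  have hs0 : s ≠ 0 := by
    intro h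
    exact hzH (by rw [hHdef]; exact h)
  set U : Set (EuclideanSpace ℝ (Fin n)) :=
    Metric.ball y ε ∩ {w | 0 < s * ⟪v, w⟫} with hU
  have hlin : IsLinearMap ℝ (fun w : EuclideanSpace ℝ (Fin n) => s * ⟪v, w⟫) := by
    constructor
    · intro a b; rw [inner_add_right]; ring
    · intro c a; simp only [real_inner_smul_right, smul_eq_mul]; ring
  have hUconv : Convex ℝ U := (convex_ball y ε).inter (convex_halfSpace_gt hlin 0)
  have hUsub : U ⊆ arrComplement P := by
    rintro w ⟨hwb, hwpos⟩
    rw [mem_arrComplement']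
    intro K hK hwK
    by_cases hKH : K = H
    · subst hKH
      rw [hHdef] at hwK
      simp only [Set.mem_setOf_eq] at hwK hwpos
      rw [hwK, mul_zero] at hwpos
      exact lt_irrefl 0 hwpos
    · exact hball hwb (Set.mem_biUnion ⟨hK, by simpa using hKH⟩ hwK)
  have hzU : z ∈ U := ⟨hzball, by
    show 0 < s * ⟪v, z⟫
    rw [← hs]
    exact mul_self_pos.mpr hs0⟩
  have hUC : U ⊆ C := by
    have h1 : U ⊆ connectedComponentIn (arrComplement P) z :=
      hUconv.isPreconnected.subset_connectedComponentIn hzU hUsub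
    have h2 := connectedComponentIn_eq hzC
    first
      | exact h1.trans h2.subset
      | exact h1.trans h2.symm.subset
  have hv2 : 0 < ‖v‖ ^ 2 := by
    have : 0 < ‖v‖ := norm_pos_iff.mpr hv
    positivity
  have claim : ∀ w ∈ H ∩ Metric.ball y (ε / 2), w ∈ closure C := by
    rintro w ⟨hwH, hwb⟩
    have htend : Filter.Tendsto (fun t : ℝ => w + t • (s • v)) (nhdsWithin 0 (Set.Ioi 0))
        (nhds w) := by
      have hc : Continuous fun t : ℝ => w + t • (s • v) :=
        continuous_const.add (continuous_id.smul continuous_const)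
      have := hc.tendsto 0
      simp only [zero_smul, add_zero] at this
      exact this.mono_left nhdsWithin_le_nhds
    have hδ : (0:ℝ) < (ε/2) / (‖s • v‖ + 1) := by positivity
    have hev : ∀ᶠ t in nhdsWithin (0:ℝ) (Set.Ioi 0), w + t • (s • v) ∈ U := by
      filter_upwards [Ioo_mem_nhdsGT_of_mem (Set.mem_Ico.mpr ⟨le_refl _, hδ⟩)] with t ht
      obtain ⟨ht0, htδ⟩ := ht
      constructor
      · rw [Metric.mem_ball]
        have h1 : dist (w + t • (s • v)) w = t * ‖s • v‖ := by
          rw [dist_eq_norm, add_sub_cancel_left, norm_smul, Real.norm_eq_abs, abs_of_pos ht0]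
        have h3 : t * ‖s • v‖ < ε/2 := by
          calc t * ‖s • v‖ ≤ t * (‖s • v‖ + 1) := by nlinarith [norm_nonneg (s • v)]
          _ < ((ε/2) / (‖s • v‖ + 1)) * (‖s • v‖ + 1) := by
              apply mul_lt_mul_of_pos_right htδ; positivity
          _ = ε/2 := div_mul_cancel₀ _ (by positivity)
        have htri := dist_triangle (w + t • (s • v)) w y
        have h2 : dist w y < ε/2 := hwb
        rw [h1] at htri
        linarith
      · have hwv : ⟪v, w⟫ = 0 := by rw [hHdef] at hwH; exact hwH
        have hinner : ⟪v, w + t • (s • v)⟫ = t * (s * ‖v‖^2) := by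
          rw [inner_add_right, hwv, real_inner_smul_right, real_inner_smul_right,
            real_inner_self_eq_norm_sq]
          ring
        simp only [Set.mem_setOf_eq, hinner]
        nlinarith [mul_pos (mul_pos ht0 (mul_self_pos.mpr hs0)) hv2]
    exact closure_mono hUC (mem_closure_of_tendsto htend hev)
  refine le_antisymm (Submodule.span_mono Set.inter_subset_left) ?_
  rw [Submodule.span_le]
  intro h hh
  have hδ : (0:ℝ) < (ε/2) / (‖h‖ + 1) := by positivity
  set δ := (ε/2) / (‖h‖ + 1) with hδdef
  have h1 : y ∈ H ∩ closure C := ⟨hyH, hy⟩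
  have hyv : ⟪v, y⟫ = 0 := by rw [hHdef] at hyH; exact hyH
  have hhv : ⟪v, h⟫ = 0 := by rw [hHdef] at hh; exact hh
  have h2mem : y + δ • h ∈ H := by
    rw [hHdef]
    simp only [Set.mem_setOf_eq]
    rw [inner_add_right, real_inner_smul_right, hyv, hhv]
    ring
  have h2ball : y + δ • h ∈ Metric.ball y (ε/2) := by
    rw [Metric.mem_ball, dist_eq_norm, add_sub_cancel_left, norm_smul, Real.norm_eq_abs,
      abs_of_pos hδ]
    calc δ * ‖h‖ < δ * (‖h‖ + 1) := by nlinarith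
    _ = ε/2 := by rw [hδdef]; exact div_mul_cancel₀ _ (by positivity)
  have h2 : y + δ • h ∈ H ∩ closure C := ⟨h2mem, claim _ ⟨h2mem, h2ball⟩⟩
  have hrepr : h = δ⁻¹ • ((y + δ • h) - y) := by
    rw [add_sub_cancel_left, smul_smul, inv_mul_cancel₀ (ne_of_gt hδ), one_smul]
  rw [hrepr]
  exact Submodule.smul_mem _ _
    (Submodule.sub_mem _ (Submodule.subset_span h2) (Submodule.subset_span h1))

lemma compIn_erase_eq {P : Set (Set (EuclideanSpace ℝ (Fin n)))} (hfin : P.Finite)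
    (hcl : ∀ K ∈ P, IsClosed K) {v : EuclideanSpace ℝ (Fin n)} (hv : v ≠ 0)
    {H : Set (EuclideanSpace ℝ (Fin n))} (hHdef : H = {x | ⟪v, x⟫ = 0}) (hHP : H ∈ P)
    {x : EuclideanSpace ℝ (Fin n)} (hx : x ∈ arrComplement P)
    (hnb : Submodule.span ℝ (H ∩ closure (connectedComponentIn (arrComplement P) x)) ≠
      Submodule.span ℝ H) :
    connectedComponentIn (arrComplement (P \ {H})) x = connectedComponentIn (arrComplement P) x := by
  have hsub : arrComplement P ⊆ arrComplement (P \ {H}) := arrComplement_mono Set.diff_subset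
  have hWop : IsOpen (arrComplement (P \ {H})) :=
    isOpen_arrComplement (hfin.subset Set.diff_subset) fun K hK => hcl K hK.1
  have hxW : x ∈ arrComplement (P \ {H}) := hsub hx
  set W := arrComplement (P \ {H}) with hW
  set Cm := connectedComponentIn W x with hCm
  -- Cm avoids H
  have hCmH : ∀ y ∈ Cm, y ∉ H := by
    intro y hyCm hyH
    -- path from x to y inside Cm
    have hconn : IsConnected Cm := isConnected_connectedComponentIn_iff.mpr hxW
    have hpath : IsPathConnected Cm := (hWop.connectedComponentIn).isConnected_iff_isPathConnected.mp hconn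
    obtain ⟨γ, hγ⟩ := (hpath.joinedIn x (mem_connectedComponentIn hxW) y hyCm)
    -- first hitting time of H
    set S : Set ℝ := {t | t ∈ Set.Icc (0:ℝ) 1 ∧ γ.extend t ∈ H} with hS
    have hScl : IsClosed S := by
      have h1 : IsClosed (Set.Icc (0:ℝ) 1) := isClosed_Icc
      have h2 : IsClosed (γ.extend ⁻¹' H) := (hcl H hHP).preimage γ.continuous_extend
      exact h1.inter h2
    have hSne : S.Nonempty := ⟨1, Set.mem_Icc.mpr ⟨zero_le_one, le_refl 1⟩, by
      rw [Path.extend_one]; exact hyH⟩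
    have hSbdd : BddBelow S := ⟨0, fun t ht => ht.1.1⟩
    set t₀ := sInf S with ht₀
    have ht₀S : t₀ ∈ S := hScl.csInf_mem hSne hSbdd
    have hxH : x ∉ H := (mem_arrComplement'.mp hx) H hHP
    have ht₀pos : 0 < t₀ := by
      rcases lt_or_eq_of_le ht₀S.1.1 with h | h
      · exact h
      · exfalso
        apply hxH
        have := ht₀S.2
        rw [← h, Path.extend_zero] at this
        exact this
    -- the initial segment lies in the component of x in arrComplement P
    have hseg : γ.extend '' Set.Ico 0 t₀ ⊆ arrComplement P := by
      rintro - ⟨t, ht, rfl⟩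
      have ht1 : t ≤ 1 := le_trans (le_of_lt ht.2) ht₀S.1.2
      have htI : t ∈ Set.Icc (0:ℝ) 1 := ⟨ht.1, ht1⟩
      have hnotS : t ∉ S := fun hts => not_lt_of_ge (csInf_le hSbdd hts) ht.2
      have hnotH : γ.extend t ∉ H := fun hH2 => hnotS ⟨htI, hH2⟩
      have hmemCm : γ.extend t ∈ Cm := by
        rw [Path.extend_apply γ htI]
        exact hγ ⟨t, htI⟩
      have hmemW : γ.extend t ∈ W := connectedComponentIn_subset _ _ hmemCm
      rw [mem_arrComplement']
      intro K hK
      by_cases hKH : K = H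
      · rw [hKH]; exact hnotH
      · exact (mem_arrComplement'.mp hmemW) K ⟨hK, by simpa using hKH⟩
    have hsegconn : IsPreconnected (γ.extend '' Set.Ico 0 t₀) :=
      isPreconnected_Ico.image _ γ.continuous_extend.continuousOn
    have hxseg : x ∈ γ.extend '' Set.Ico 0 t₀ :=
      ⟨0, Set.mem_Ico.mpr ⟨le_refl 0, ht₀pos⟩, Path.extend_zero γ⟩
    have hsegC : γ.extend '' Set.Ico 0 t₀ ⊆ connectedComponentIn (arrComplement P) x := by
      have h1 := hsegconn.subset_connectedComponentIn hxseg hseg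
      have h2 := connectedComponentIn_eq (h1 hxseg)
      first
        | exact h1.trans h2.subset
        | exact h1.trans h2.symm.subset
    -- the hitting point is in the closure of the component
    have hy' : γ.extend t₀ ∈ closure (connectedComponentIn (arrComplement P) x) := by
      have hcl2 : t₀ ∈ closure (Set.Ico 0 t₀) := by
        rw [closure_Ico (ne_of_lt ht₀pos)]
        exact Set.mem_Icc.mpr ⟨le_of_lt ht₀pos, le_refl t₀⟩
      have := map_mem_closure γ.continuous_extend hcl2 (Set.mapsTo_image _ _)
      exact closure_mono hsegC this
    -- γ.extend t₀ avoids all other hyperplanes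
    have havoid : ∀ K ∈ P, K ≠ H → γ.extend t₀ ∉ K := by
      intro K hK hKH
      have hmemCm : γ.extend t₀ ∈ Cm := by
        rw [Path.extend_apply γ ht₀S.1]
        exact hγ ⟨t₀, ht₀S.1⟩
      have hmemW : γ.extend t₀ ∈ W := connectedComponentIn_subset _ _ hmemCm
      exact (mem_arrComplement'.mp hmemW) K ⟨hK, by simpa using hKH⟩
    exact hnb (span_boundary hfin hcl hv hHdef hHP hy' ht₀S.2 havoid)
  -- hence Cm is inside arrComplement P
  have hCmP : Cm ⊆ arrComplement P := by
    intro y hy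
    have hyW : y ∈ W := connectedComponentIn_subset _ _ hy
    rw [mem_arrComplement']
    intro K hK
    by_cases hKH : K = H
    · rw [hKH]; exact hCmH y hy
    · exact (mem_arrComplement'.mp hyW) K ⟨hK, by simpa using hKH⟩
  apply le_antisymm
  · have hconn : IsPreconnected Cm := by
      by_cases hne : x ∈ W
      · exact (isConnected_connectedComponentIn_iff.mpr hne).isPreconnected
      · exact absurd hxW hne
    have h1 := hconn.subset_connectedComponentIn (mem_connectedComponentIn hxW) hCmP
    exact h1
  · exact connectedComponentIn_mono x hsub

lemma isBasicIn_iff {A' : Set (Set (EuclideanSpace ℝ (Fin n)))} (hfin : A'.Finite)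
    (hcl : ∀ K ∈ A', IsClosed K)
    {B₀ K : Set (EuclideanSpace ℝ (Fin n))} {x₀ : EuclideanSpace ℝ (Fin n)}
    (hx₀ : x₀ ∈ arrComplement A') (hx₀B : x₀ ∈ B₀)
    (hB₀ : B₀ ⊆ closure (connectedComponentIn (arrComplement A') x₀)) :
    IsBasicIn A' B₀ K ↔ K ∈ A' ∧
      Submodule.span ℝ (K ∩ closure (connectedComponentIn (arrComplement A') x₀)) =
        Submodule.span ℝ K := by
  have hop : IsOpen (arrComplement A') := isOpen_arrComplement hfin hcl
  constructor
  · rintro ⟨hK, B', ⟨z, hz, rfl⟩, hBB', hspan⟩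
    refine ⟨hK, ?_⟩
    have hx₀mem : x₀ ∈ connectedComponentIn (arrComplement A') z :=
      mem_compIn_of_closure hop (hBB' hx₀B) hx₀
    have heq := connectedComponentIn_eq hx₀mem
    first
      | rwa [heq] at hspan
      | rwa [← heq] at hspan
  · rintro ⟨hK, hspan⟩
    exact ⟨hK, closure (connectedComponentIn (arrComplement A') x₀),
      ⟨x₀, hx₀, rfl⟩, hB₀, hspan⟩

lemma hyp_subset_eq {u v : EuclideanSpace ℝ (Fin n)} (hu : u ≠ 0) (hv : v ≠ 0)
    {H H' : Set (EuclideanSpace ℝ (Fin n))} (hH : H = {x | ⟪u, x⟫ = 0})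
    (hH' : H' = {x | ⟪v, x⟫ = 0}) (hsub : H ⊆ H') : H = H' := by
  rw [hyp_set_eq] at hH hH'
  subst hH hH'
  have hle : ((ℝ ∙ u)ᗮ : Submodule ℝ (EuclideanSpace ℝ (Fin n))) ≤ (ℝ ∙ v)ᗮ := hsub
  have h1 := finrank_hyp hu
  have h2 := finrank_hyp hv
  rw [Submodule.eq_of_le_of_finrank_le hle (by omega)]

/-- In a two-element pencil, the hyperplanes are always basic (formulated as a
contradiction from non-basicness). -/
lemma two_hyp_contradiction {u v : EuclideanSpace ℝ (Fin n)} (hu : u ≠ 0) (hv : v ≠ 0)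
    {H H' : Set (EuclideanSpace ℝ (Fin n))} (hH : H = {x | ⟪u, x⟫ = 0})
    (hH' : H' = {x | ⟪v, x⟫ = 0}) (hne : H ≠ H')
    {x : EuclideanSpace ℝ (Fin n)} (hx : x ∈ arrComplement {H, H'})
    (hnbH : Submodule.span ℝ (H ∩ closure (connectedComponentIn (arrComplement {H, H'}) x)) ≠
      Submodule.span ℝ H) : False := by
  have hfin : ({H, H'} : Set (Set (EuclideanSpace ℝ (Fin n)))).Finite :=
    (Set.finite_singleton H').insert H
  have hcl : ∀ K ∈ ({H, H'} : Set (Set (EuclideanSpace ℝ (Fin n)))), IsClosed K := by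
    rintro K (rfl | rfl)
    · exact hyp_closed ⟨u, hu, hH⟩
    · exact hyp_closed ⟨v, hv, hH'⟩
  have hHP : H ∈ ({H, H'} : Set (Set (EuclideanSpace ℝ (Fin n)))) := Set.mem_insert _ _
  have hdiff : ({H, H'} : Set (Set (EuclideanSpace ℝ (Fin n)))) \ {H} = {H'} := by
    ext K
    simp only [Set.mem_diff, Set.mem_insert_iff, Set.mem_singleton_iff]
    constructor
    · rintro ⟨rfl | rfl, h2⟩
      · exact absurd rfl h2
      · rfl
    · rintro rfl
      exact ⟨Or.inr rfl, fun h => hne h.symm⟩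
  have hkey := compIn_erase_eq hfin hcl hu hH hHP hx hnbH
  rw [hdiff] at hkey
  -- the side of H' through x
  set U : Set (EuclideanSpace ℝ (Fin n)) := {w | 0 < ⟪v, w⟫ * ⟪v, x⟫} with hU
  have hlin : IsLinearMap ℝ (fun w : EuclideanSpace ℝ (Fin n) => ⟪v, w⟫ * ⟪v, x⟫) := by
    constructor
    · intro a b; rw [inner_add_right]; ring
    · intro c a; simp only [real_inner_smul_right, smul_eq_mul]; ring
  have hUconv : Convex ℝ U := convex_halfSpace_gt hlin 0
  have hxH' : x ∉ H' := (mem_arrComplement'.mp hx) H' (Set.mem_insert_of_mem _ rfl)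
  have hvx : ⟪v, x⟫ ≠ 0 := fun h => hxH' (by rw [hH']; exact h)
  have hxU : x ∈ U := by
    show 0 < ⟪v, x⟫ * ⟪v, x⟫
    exact mul_self_pos.mpr hvx
  have hUsub : U ⊆ arrComplement {H'} := by
    intro w hw
    rw [mem_arrComplement']
    rintro K rfl hwK
    rw [hH'] at hwK
    simp only [Set.mem_setOf_eq] at hwK
    simp only [hU, Set.mem_setOf_eq, hwK, zero_mul] at hw
    exact lt_irrefl 0 hw
  have hxc : x ∈ arrComplement ({H'} : Set (Set (EuclideanSpace ℝ (Fin n)))) := hUsub hxU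
  have hUC : U ⊆ connectedComponentIn (arrComplement {H'}) x :=
    hUconv.isPreconnected.subset_connectedComponentIn hxU hUsub
  -- find h ∈ H with ⟪v,h⟫ ≠ 0
  have hexists : ∃ h ∈ H, ⟪v, h⟫ ≠ 0 := by
    by_contra hcon
    push_neg at hcon
    apply hne
    apply hyp_subset_eq hu hv hH hH'
    intro w hw
    rw [hH']
    exact hcon w hw
  obtain ⟨h, hhH, hvh⟩ := hexists
  set c : ℝ := ⟪v, x⟫ / ⟪v, h⟫ with hc
  have hchH : c • h ∈ H := by
    rw [hH] at hhH ⊢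
    simp only [Set.mem_setOf_eq] at hhH ⊢
    rw [real_inner_smul_right, hhH, mul_zero]
  have hchU : c • h ∈ U := by
    show 0 < ⟪v, c • h⟫ * ⟪v, x⟫
    rw [real_inner_smul_right, hc, div_mul_cancel₀ _ hvh]
    exact mul_self_pos.mpr hvx
  have : c • h ∈ connectedComponentIn (arrComplement {H, H'}) x := by
    rw [← hkey]
    exact hUC hchU
  have hmem := connectedComponentIn_subset (arrComplement {H, H'}) x this
  exact (mem_arrComplement'.mp hmem) H hHP hchH

lemma pencil_subset (A : Set (Set (EuclideanSpace ℝ (Fin n))))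
    (H₁ H₂ : Set (EuclideanSpace ℝ (Fin n))) : pencil A H₁ H₂ ⊆ A := fun _ hK => hK.1

lemma pencil_diff (A : Set (Set (EuclideanSpace ℝ (Fin n))))
    (H H₁ H₂ : Set (EuclideanSpace ℝ (Fin n))) :
    pencil (A \ {H}) H₁ H₂ = pencil A H₁ H₂ \ {H} := by
  ext K
  simp only [pencil, Set.mem_setOf_eq, Set.mem_diff, Set.mem_singleton_iff]
  tauto

lemma pencil_comm (A : Set (Set (EuclideanSpace ℝ (Fin n))))
    (H₁ H₂ : Set (EuclideanSpace ℝ (Fin n))) : pencil A H₁ H₂ = pencil A H₂ H₁ := by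
  simp only [pencil, Set.inter_comm]

lemma pencil_congr {A : Set (Set (EuclideanSpace ℝ (Fin n)))}
    {K H₂ H₃ : Set (EuclideanSpace ℝ (Fin n))} (hK : IsHyperplane K) (h2 : IsHyperplane H₂)
    (h3 : IsHyperplane H₃) (hne12 : K ≠ H₂) (hne23 : H₂ ≠ H₃) (hsub : H₂ ∩ H₃ ⊆ K) :
    pencil A K H₂ = pencil A H₂ H₃ := by
  obtain ⟨u, hu, hKd⟩ := hK
  obtain ⟨v, hv, h2d⟩ := h2
  obtain ⟨w, hw, h3d⟩ := h3
  have key : K ∩ H₂ = H₂ ∩ H₃ := by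
    subst hKd h2d h3d
    simp only [hyp_set_eq u, hyp_set_eq v, hyp_set_eq w] at hne12 hne23 hsub ⊢
    exact hyp_inter_eq hu hv hw hne12 hne23 hsub
  simp only [pencil, key]

end Aux

/-- **Lemma (Reading, Lemma 6).** Let `I ⊆ A` and let `H ∈ I` be a sink of the sub-digraph of
the basic digraph 𝒟(𝒜,B) induced by `I`.  Let `A⁻ = A − {H}` and let `B⁻` be the region of
`A⁻` containing `B`.  Then the shards of `(A,B)` contained in hyperplanes of `I − {H}` are
exactly the shards of `(A⁻,B⁻)` contained in hyperplanes of `I − {H}`. -/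
theorem shards_inherit {n : ℕ}
    (A : Set (Set (EuclideanSpace ℝ (Fin n)))) (B : Set (EuclideanSpace ℝ (Fin n)))
    (hA : IsCentralArrangement A) (hB : IsRegion A B)
    (I : Set (Set (EuclideanSpace ℝ (Fin n)))) (hI : I ⊆ A)
    (H : Set (EuclideanSpace ℝ (Fin n))) (hH : H ∈ I)
    (hsink : ∀ H' ∈ I, ¬ BasicEdge A B H H')
    (Bm : Set (EuclideanSpace ℝ (Fin n)))
    (hBm : IsRegion (A \ {H}) Bm) (hBBm : B ⊆ Bm) :
    ∀ H' ∈ I \ {H}, ∀ Sg,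
      (IsShardOf A B H' Sg ↔ IsShardOf (A \ {H}) Bm H' Sg) := by
  
  obtain ⟨hAfin, -, hAhyp⟩ := hA
  have hAcl : ∀ K ∈ A, IsClosed K := fun K hK => hyp_closed (hAhyp K hK)
  obtain ⟨x₀, hx₀, hBdef⟩ := hB
  have hx₀B : x₀ ∈ B := by
    rw [hBdef]; exact subset_closure (mem_connectedComponentIn hx₀)
  have hx₀sub : ∀ A' ⊆ A, x₀ ∈ arrComplement A' := fun A' h => arrComplement_mono h hx₀
  have hBsub : ∀ A' ⊆ A, B ⊆ closure (connectedComponentIn (arrComplement A') x₀) := by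
    intro A' hA'
    rw [hBdef]
    exact closure_mono (connectedComponentIn_mono x₀ (arrComplement_mono hA'))
  have hBmsub : ∀ A' ⊆ A \ {H}, Bm ⊆ closure (connectedComponentIn (arrComplement A') x₀) := by
    intro A' hA'
    obtain ⟨z, hz, hBmdef⟩ := hBm
    have hfinm : (A \ {H}).Finite := hAfin.subset Set.diff_subset
    have hclm : ∀ K ∈ A \ {H}, IsClosed K := fun K hK => hAcl K hK.1
    have hopm : IsOpen (arrComplement (A \ {H})) := isOpen_arrComplement hfinm hclm
    have hx₀m : x₀ ∈ arrComplement (A \ {H}) := arrComplement_mono Set.diff_subset hx₀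
    have hx₀Bm : x₀ ∈ Bm := hBBm hx₀B
    have hx₀z : x₀ ∈ connectedComponentIn (arrComplement (A \ {H})) z := by
      rw [hBmdef] at hx₀Bm
      exact mem_compIn_of_closure hopm hx₀Bm hx₀m
    have heq := connectedComponentIn_eq hx₀z
    have hBm2 : Bm = closure (connectedComponentIn (arrComplement (A \ {H})) x₀) := by
      rw [hBmdef]
      first
        | rw [heq]
        | rw [← heq]
    rw [hBm2]
    exact closure_mono (connectedComponentIn_mono x₀ (arrComplement_mono hA'))
  have hcharB : ∀ A', ∀ hA' : A' ⊆ A, ∀ K, IsBasicIn A' B K ↔ K ∈ A' ∧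
      Submodule.span ℝ (K ∩ closure (connectedComponentIn (arrComplement A') x₀)) =
        Submodule.span ℝ K := fun A' h K =>
    isBasicIn_iff (hAfin.subset h) (fun K hK => hAcl K (h hK)) (hx₀sub A' h) hx₀B (hBsub A' h)
  have hcharBm : ∀ A', ∀ hA' : A' ⊆ A \ {H}, ∀ K, IsBasicIn A' Bm K ↔ K ∈ A' ∧
      Submodule.span ℝ (K ∩ closure (connectedComponentIn (arrComplement A') x₀)) =
        Submodule.span ℝ K := fun A' h K =>
    isBasicIn_iff (hAfin.subset (h.trans Set.diff_subset))
      (fun K hK => hAcl K (h hK).1) (hx₀sub A' (h.trans Set.diff_subset)) (hBBm hx₀B)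
      (hBmsub A' h)
  have hHA : H ∈ A := hI hH
  obtain ⟨u, hu, hHdef⟩ := hAhyp H hHA
  intro H' hH'mem Sg
  have hH'I : H' ∈ I := hH'mem.1
  have hH'neH : H' ≠ H := by simpa using hH'mem.2
  have hH'A : H' ∈ A := hI hH'I
  obtain ⟨v, hv, hH'def⟩ := hAhyp H' hH'A
  have hsink' := hsink H' hH'I
  have key : ∀ H'' ∈ A, H'' ≠ H' → H'' ≠ H →
      (IsBasicIn (pencil A H' H'') B H' ↔ IsBasicIn (pencil (A \ {H}) H' H'') Bm H') := by
    intro H'' hH''A hH''ne hH''neH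
    set P := pencil A H' H'' with hP
    have hPsub : P ⊆ A := pencil_subset A H' H''
    have hPdiff : pencil (A \ {H}) H' H'' = P \ {H} := pencil_diff A H H' H''
    have hH'P : H' ∈ P := ⟨hH'A, Set.inter_subset_left⟩
    by_cases hHP : H ∈ P
    · -- the pencil contains H : use the sink hypothesis
      have hP2 : pencil A H H' = P := by
        rw [hP]
        exact pencil_congr ⟨u, hu, hHdef⟩ ⟨v, hv, hH'def⟩ (hAhyp H'' hH''A)
          hH'neH.symm (Ne.symm hH''ne) hHP.2
      have hnbH : ¬ IsBasicIn P B H := by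
        intro hb
        exact hsink' ⟨hHA, hH'A, hH'neH.symm, by rw [hP2]; exact hb⟩
      have hnb2 : Submodule.span ℝ (H ∩ closure (connectedComponentIn (arrComplement P) x₀)) ≠
          Submodule.span ℝ H := by
        intro h
        exact hnbH ((hcharB P hPsub H).mpr ⟨hHP, h⟩)
      have hkey := compIn_erase_eq (hAfin.subset hPsub) (fun K hK => hAcl K (hPsub hK)) hu hHdef
        hHP (hx₀sub P hPsub) hnb2
      have hcl_eq : closure (connectedComponentIn (arrComplement (P \ {H})) x₀) =
          closure (connectedComponentIn (arrComplement P) x₀) := by rw [hkey]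
      have hPm_sub : P \ {H} ⊆ A \ {H} := fun K hK => ⟨hPsub hK.1, hK.2⟩
      have hH'Pm : H' ∈ P \ {H} := ⟨hH'P, by simpa using hH'neH⟩
      rw [hPdiff, hcharB P hPsub H', hcharBm (P \ {H}) hPm_sub H', hcl_eq]
      simp [hH'P, hH'Pm]
    · -- H is not in the pencil
      have hPd : P \ {H} = P := by
        apply Set.diff_singleton_eq_self
        exact hHP
      have hPm_sub : P ⊆ A \ {H} := by
        intro K hK
        refine ⟨hPsub hK, ?_⟩
        simp only [Set.mem_singleton_iff]
        rintro rfl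
        exact hHP hK
      rw [hPdiff, hPd, hcharB P hPsub H', hcharBm P hPm_sub H']
  -- the case H'' = H : find a replacement hyperplane in the pencil
  have caseH : ¬ IsBasicIn (pencil A H' H) B H' →
      ∃ K ∈ A \ {H}, K ≠ H' ∧ ¬ IsBasicIn (pencil (A \ {H}) H' K) Bm H' ∧ H' ∩ H ⊆ H' ∩ K := by
    intro hnb
    set P := pencil A H' H with hP
    have hPsub : P ⊆ A := pencil_subset A H' H
    have hHP : H ∈ P := ⟨hHA, Set.inter_subset_right⟩
    have hH'P : H' ∈ P := ⟨hH'A, Set.inter_subset_left⟩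
    have hP2 : pencil A H H' = P := pencil_comm A H H'
    have hnbH : ¬ IsBasicIn P B H := by
      intro hb
      exact hsink' ⟨hHA, hH'A, hH'neH.symm, by rw [hP2]; exact hb⟩
    have hnb2 : Submodule.span ℝ (H ∩ closure (connectedComponentIn (arrComplement P) x₀)) ≠
        Submodule.span ℝ H := by
      intro h
      exact hnbH ((hcharB P hPsub H).mpr ⟨hHP, h⟩)
    by_cases hex : ∃ K ∈ P, K ≠ H ∧ K ≠ H'
    · obtain ⟨K, hKP, hKneH, hKneH'⟩ := hex
      refine ⟨K, ⟨hPsub hKP, by simpa using hKneH⟩, hKneH', ?_, ?_⟩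
      · -- not basic in the reduced pencil
        have hPK : pencil A H' K = P := by
          rw [pencil_comm A H' K, hP]
          exact pencil_congr (hAhyp K (hPsub hKP)) ⟨v, hv, hH'def⟩ ⟨u, hu, hHdef⟩
            hKneH' hH'neH hKP.2
        have hPdiff : pencil (A \ {H}) H' K = P \ {H} := by
          rw [pencil_diff A H H' K, hPK]
        have hkey := compIn_erase_eq (hAfin.subset hPsub) (fun M hM => hAcl M (hPsub hM)) hu
          hHdef hHP (hx₀sub P hPsub) hnb2
        have hcl_eq : closure (connectedComponentIn (arrComplement (P \ {H})) x₀) =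
            closure (connectedComponentIn (arrComplement P) x₀) := by rw [hkey]
        have hPm_sub : P \ {H} ⊆ A \ {H} := fun M hM => ⟨hPsub hM.1, hM.2⟩
        have hH'Pm : H' ∈ P \ {H} := ⟨hH'P, by simpa using hH'neH⟩
        rw [hPdiff, hcharBm (P \ {H}) hPm_sub H', hcl_eq]
        rw [hcharB P hPsub H'] at hnb
        intro hcon
        exact hnb ⟨hH'P, hcon.2⟩
      · exact fun z hz => ⟨hz.1, hKP.2 hz⟩
    · -- the pencil is exactly {H, H'} : impossible since H is a sink
      exfalso
      push_neg at hex
      have hPeq : P = {H, H'} := by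
        apply Set.eq_of_subset_of_subset
        · intro K hK
          rcases eq_or_ne K H with h | h
          · exact Or.inl h
          · exact Or.inr (hex K hK h)
        · rintro K (rfl | rfl)
          · exact hHP
          · exact hH'P
      rw [hPeq] at hnb2
      exact two_hyp_contradiction hu hv hHdef hH'def hH'neH.symm
        (hx₀sub {H, H'} (by rw [← hPeq]; exact hPsub)) hnb2
  -- shard cuts coincide
  have hcut : (⋃ K ∈ {K | K ∈ A ∧ K ≠ H' ∧ ¬ IsBasicIn (pencil A H' K) B H'}, (H' ∩ K)) =
      (⋃ K ∈ {K | K ∈ A \ {H} ∧ K ≠ H' ∧ ¬ IsBasicIn (pencil (A \ {H}) H' K) Bm H'},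
        (H' ∩ K)) := by
    apply Set.eq_of_subset_of_subset
    · refine Set.iUnion₂_subset ?_
      rintro K ⟨hKA, hKneH', hKnb⟩
      rcases eq_or_ne K H with rfl | hKneH
      · obtain ⟨M, hMA, hMne, hMnb, hsubM⟩ := caseH hKnb
        intro z hz
        exact Set.mem_biUnion (⟨hMA, hMne, hMnb⟩ : _ ∧ _ ∧ _) (hsubM hz)
      · intro z hz
        refine Set.mem_biUnion ?_ hz
        exact ⟨⟨hKA, by simpa using hKneH⟩, hKneH',
          fun hb => hKnb ((key K hKA hKneH' hKneH).mpr hb)⟩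
    · refine Set.iUnion₂_subset ?_
      rintro K ⟨⟨hKA, hKneHs⟩, hKneH', hKnb⟩
      intro z hz
      refine Set.mem_biUnion ?_ hz
      exact ⟨hKA, hKneH', fun hb => hKnb ((key K hKA hKneH' (by simpa using hKneHs)).mp hb)⟩
  have hcuteq : shardCut A B H' = shardCut (A \ {H}) Bm H' := by
    unfold shardCut
    rw [hcut]
  unfold IsShardOf
  rw [hcuteq]
  constructor
  · rintro ⟨-, h⟩
    exact ⟨⟨hH'A, by simpa using hH'neH⟩, h⟩
  · rintro ⟨-, h⟩
    exact ⟨hH'A, h⟩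
end
end

section
/- The order dimension of a finite poset P is equal to the smallest d such that there exist order-preserving maps η₁,…,η_d : P → ℕ with the property that for every subcritical pair (j,m) of P there is some i with η_i(m) < η_i(j). -/
/-- `(j, m)` is a subcritical pair in the poset `P`: `j ≰ m`, everything strictly below `j`
is below `m`, and everything strictly above `m` is above `j`. -/
def Subcritical {P : Type*} [PartialOrder P] (j m : P) : Prop :=
  ¬ j ≤ m ∧ (∀ x, x < j → x ≤ m) ∧ (∀ x, m < x → j ≤ x)

/-- The order dimension of a poset `P`: the smallest `d` such that `P` embeds as an induced
subposet of ℝᵈ with the componentwise order. -/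
noncomputable def orderDim (P : Type*) [PartialOrder P] : ℕ :=
  sInf {d : ℕ | ∃ f : P → (Fin d → ℝ), ∀ x y : P, x ≤ y ↔ ∀ i, f x i ≤ f y i}

lemma exists_subcritical_pair {P : Type*} [PartialOrder P] [Fintype P] {x y : P}
    (h : ¬ x ≤ y) : ∃ j m : P, Subcritical j m ∧ j ≤ x ∧ y ≤ m := by
  classical
  obtain ⟨j, hj, hjmin⟩ : ∃ i ∈ Finset.univ.filter (fun w => w ≤ x ∧ ¬ w ≤ y),
      ∀ z ∈ Finset.univ.filter (fun w => w ≤ x ∧ ¬ w ≤ y), ¬ z < i := (Finset.exists_minimal (s :=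
    (Finset.univ.filter (fun w => w ≤ x ∧ ¬ w ≤ y))) ⟨x, by simp [h]⟩).imp
      fun i hi => ⟨hi.1, fun z hz hlt => hlt.not_ge (hi.2 hz hlt.le)⟩
  simp only [Finset.mem_filter, Finset.mem_univ, true_and] at hj
  obtain ⟨m, hm, hmmax⟩ : ∃ i ∈ Finset.univ.filter (fun w => y ≤ w ∧ ¬ j ≤ w),
      ∀ z ∈ Finset.univ.filter (fun w => y ≤ w ∧ ¬ j ≤ w), ¬ i < z := (Finset.exists_maximal (s :=
    (Finset.univ.filter (fun w => y ≤ w ∧ ¬ j ≤ w))) ⟨y, by simp [hj.2]⟩).imp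
      fun i hi => ⟨hi.1, fun z hz hlt => hlt.not_ge (hi.2 hz hlt.le)⟩
  simp only [Finset.mem_filter, Finset.mem_univ, true_and] at hm
  refine ⟨j, m, ⟨hm.2, ?_, ?_⟩, hj.1, hm.1⟩
  · intro z hz
    have hzy : z ≤ y := by
      by_contra hzy
      exact hjmin z (by simp [le_trans hz.le hj.1, hzy]) hz
    exact hzy.trans hm.1
  · intro z hz
    by_contra hjz
    exact hmmax z (by simp [le_trans hm.1 hz.le, hjz]) hz


/-- **Proposition (Reading, Proposition 11).** The order dimension of a finite poset `P` is
the smallest `d` such that there exist order-preserving maps `η₁, …, η_d : P → ℕ` such that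
every subcritical pair `(j,m)` of `P` is reversed by some `η_i`. -/
theorem orderDim_eq_subcritical_reversing_maps
    (P : Type*) [PartialOrder P] [Fintype P] :
    orderDim P = sInf {d : ℕ | ∃ η : Fin d → P → ℕ,
      (∀ i, Monotone (η i)) ∧
      ∀ j m : P, Subcritical j m → ∃ i, η i m < η i j} := by
  classical
  unfold orderDim
  congr 1
  ext d
  constructor
  · rintro ⟨f, hf⟩
    refine ⟨fun i x => (Finset.univ.filter (fun z => f z i ≤ f x i)).card, ?_, ?_⟩
    · intro i x y hxy
      refine Finset.card_le_card (Finset.monotone_filter_right _ ?_)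
      intro z _ hz
      exact le_trans hz (((hf x y).1 hxy) i)
    · intro j m hjm
      obtain ⟨i, hi⟩ : ∃ i, ¬ f j i ≤ f m i := by
        by_contra hc
        push_neg at hc
        exact hjm.1 ((hf j m).2 hc)
      refine ⟨i, Finset.card_lt_card ⟨Finset.monotone_filter_right _
        (fun z _ hz => le_trans hz (le_of_lt (lt_of_not_ge hi))), ?_⟩⟩
      intro hsub
      exact hi (by simpa using hsub (by simp : j ∈ Finset.univ.filter (fun z => f z i ≤ f j i)))
  · rintro ⟨η, hmono, hrev⟩
    refine ⟨fun x i => (η i x : ℝ), fun x y => ⟨fun hxy i => ?_, ?_⟩⟩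
    · show ((η i x : ℝ) ≤ η i y)
      exact_mod_cast hmono i hxy
    intro hall
    by_contra hxy
    obtain ⟨j, m, hjm, hjx, hym⟩ := exists_subcritical_pair hxy
    obtain ⟨i, hi⟩ := hrev j m hjm
    have h1 : η i y < η i x := lt_of_le_of_lt (hmono i hym) (lt_of_lt_of_le hi (hmono i hjx))
    have h2 : ((η i x : ℝ) ≤ η i y) := hall i
    exact absurd h2 (by exact_mod_cast not_le.2 h1)
end

section
/- The order dimension of a finite poset P is equal to the smallest d such that there exist posets Q₁,…,Q_d and order-preserving maps η_i : P → Q_i for i = 1,…,d with the property that for every subcritical pair (j,m) of P there is some i with η_i(m) < η_i(j). -/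
open Classical in
/-- Auxiliary real-valued rank map coming from a linear extension of `Q`. -/
noncomputable def gmap {P : Type*} [PartialOrder P] [Fintype P] {Q : Type*} [PartialOrder Q]
    (η : P → Q) (x : P) : ℝ :=
  ((Finset.univ.filter fun z : P =>
    toLinearExtension (η z) ≤ toLinearExtension (η x)).card : ℝ)

lemma toLinearExtension_strictMono {Q : Type*} [PartialOrder Q] :
    StrictMono (toLinearExtension (α := Q)) := fun a b hab =>
  lt_of_le_of_ne (toLinearExtension.monotone hab.le) (fun h => hab.ne (congrArg id h))

open Classical in
lemma gmap_mono {P : Type*} [PartialOrder P] [Fintype P] {Q : Type*} [PartialOrder Q]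
    {η : P → Q} (hη : Monotone η) : Monotone (gmap η) := by
  intro x y hxy
  have : (Finset.univ.filter fun z : P =>
      toLinearExtension (η z) ≤ toLinearExtension (η x)) ⊆
      (Finset.univ.filter fun z : P =>
      toLinearExtension (η z) ≤ toLinearExtension (η y)) := by
    intro z hz
    simp only [Finset.mem_filter, Finset.mem_univ, true_and] at hz ⊢
    exact hz.trans (toLinearExtension.monotone (hη hxy))
  unfold gmap
  exact_mod_cast Finset.card_le_card this

open Classical in
lemma gmap_strict {P : Type*} [PartialOrder P] [Fintype P] {Q : Type*} [PartialOrder Q]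
    {η : P → Q} {m j : P} (h : η m < η j) : gmap η m < gmap η j := by
  have hL : toLinearExtension (η m) < toLinearExtension (η j) :=
    toLinearExtension_strictMono h
  have hss : (Finset.univ.filter fun z : P =>
      toLinearExtension (η z) ≤ toLinearExtension (η m)) ⊂
      (Finset.univ.filter fun z : P =>
      toLinearExtension (η z) ≤ toLinearExtension (η j)) := by
    constructor
    · intro z hz
      simp only [Finset.mem_filter, Finset.mem_univ, true_and] at hz ⊢
      exact hz.trans hL.le
    · intro hsub
      have := hsub (by simp : j ∈ Finset.univ.filter fun z : P =>
        toLinearExtension (η z) ≤ toLinearExtension (η j))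
      simp only [Finset.mem_filter, Finset.mem_univ, true_and] at this
      exact absurd this (not_le.mpr hL)
  unfold gmap
  exact_mod_cast Finset.card_lt_card hss

open Classical in
lemma exists_subcritical_of_not_le {P : Type*} [PartialOrder P] [Fintype P]
    {x y : P} (h : ¬ x ≤ y) : ∃ j m, Subcritical j m ∧ j ≤ x ∧ y ≤ m := by
  obtain ⟨j, hjS, hjmin⟩ : ∃ j ∈ (Finset.univ.filter fun j' : P => j' ≤ x ∧ ¬ j' ≤ y),
      ∀ z ∈ (Finset.univ.filter fun j' : P => j' ≤ x ∧ ¬ j' ≤ y), ¬ z < j := by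
    obtain ⟨j, hjS, hjmin⟩ := Finset.exists_minimal
      (s := Finset.univ.filter fun j' : P => j' ≤ x ∧ ¬ j' ≤ y)
      ⟨x, by simp [h]⟩
    exact ⟨j, hjS, fun z hz hlt => hlt.not_ge (hjmin hz hlt.le)⟩
  simp only [Finset.mem_filter, Finset.mem_univ, true_and] at hjS
  obtain ⟨m, hmT, hmmax⟩ : ∃ m ∈ (Finset.univ.filter fun m' : P => y ≤ m' ∧ ¬ j ≤ m'),
      ∀ z ∈ (Finset.univ.filter fun m' : P => y ≤ m' ∧ ¬ j ≤ m'), ¬ m < z := by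
    obtain ⟨m, hmT, hmmax⟩ := Finset.exists_maximal
      (s := Finset.univ.filter fun m' : P => y ≤ m' ∧ ¬ j ≤ m')
      ⟨y, by simp [hjS.2]⟩
    exact ⟨m, hmT, fun z hz hlt => hlt.not_ge (hmmax hz hlt.le)⟩
  simp only [Finset.mem_filter, Finset.mem_univ, true_and] at hmT
  refine ⟨j, m, ⟨hmT.2, ?_, ?_⟩, hjS.1, hmT.1⟩
  · intro z hz
    by_contra hzm
    have hzy : ¬ z ≤ y := fun hzy => hzm (hzy.trans hmT.1)
    exact hjmin z (by simp [hz.le.trans hjS.1, hzy]) hz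
  · intro z hz
    by_contra hjz
    exact hmmax z (by simp [(hmT.1.trans hz.le), hjz]) hz

/-- **Proposition (Reading, Proposition 12).** The order dimension of a finite poset `P` is
the smallest `d` such that there exist posets `Q₁, …, Q_d` and order-preserving maps
`η_i : P → Q_i` such that every subcritical pair `(j,m)` of `P` is reversed by some `η_i`. -/
theorem orderDim_eq_subcritical_reversing_maps_into_posets
    (P : Type*) [PartialOrder P] [Fintype P] :
    orderDim P = sInf {d : ℕ | ∃ (Q : Fin d → Type) (iQ : ∀ i, PartialOrder (Q i))
      (η : ∀ i, P → Q i),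
      (∀ i, @Monotone P (Q i) _ (iQ i).toPreorder (η i)) ∧
      ∀ j m : P, Subcritical j m →
        ∃ i, @LT.lt (Q i) ((iQ i).toPreorder.toLT) (η i m) (η i j)} := by
  unfold orderDim
  congr 1
  ext d
  simp only [Set.mem_setOf_eq]
  constructor
  · rintro ⟨f, hf⟩
    refine ⟨fun _ => ℝ, fun _ => inferInstance, fun i x => f x i,
      fun i x y hxy => (hf x y).mp hxy i, ?_⟩
    rintro j m ⟨hjm, -, -⟩
    have : ¬ ∀ i, f j i ≤ f m i := fun hh => hjm ((hf j m).mpr hh)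
    push_neg at this
    obtain ⟨i, hi⟩ := this
    exact ⟨i, hi⟩
  · rintro ⟨Q, iQ, η, hmono, hrev⟩
    refine ⟨fun x i => @gmap P _ _ (Q i) (iQ i) (η i) x, fun x y => ⟨?_, ?_⟩⟩
    · intro hxy i
      letI := iQ i
      exact gmap_mono (hmono i) hxy
    · intro hall
      by_contra hxy
      obtain ⟨j, m, hsc, hjx, hym⟩ := exists_subcritical_of_not_le hxy
      obtain ⟨i, hi⟩ := hrev j m hsc
      letI := iQ i
      have h1 : gmap (η i) y ≤ gmap (η i) m := gmap_mono (hmono i) hym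
      have h2 : gmap (η i) m < gmap (η i) j := gmap_strict hi
      have h3 : gmap (η i) j ≤ gmap (η i) x := gmap_mono (hmono i) hjx
      exact absurd (hall i) (not_le.mpr ((h1.trans_lt h2).trans_le h3))
end
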